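/- arXiv:1411.5929 — 7 statements merged into one kernel-verified Lean document; each statement's English description precedes it below -/
import Mathlib

section
/- Let G be a finite abelian group of order n and F a number field. For each normal subgroup N of G with G/N cyclic of order k, and each orbit C of the faithful characters of G/N under Gal(F(ζ_k)/F), the element ε_C(G,N) = (1/|G|) Σ_{g∈G} Tr_{F(ζ_k)/F}(χ(gN)) g⁻¹ (for any χ ∈ C) is a primitive central idempotent of the group algebra FG, and FG·ε_C(G,N) ≅ F(ζ_k) as F-algebras. -/
set_option synthInstance.maxHeartbeats 1000000
set_option maxHeartbeats 1000000
open IntermediateField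

set_option linter.unusedSectionVars false
set_option linter.unusedVariables false

section Aux
variable {G : Type*} [CommGroup G] [Fintype G]
  (F : IntermediateField ℚ ℂ) (ζ : ℂ)
  (χ : G →* ℂ) (hmem : ∀ g : G, χ g ∈ adjoin F {ζ})

/-- χ as a character valued in F(ζ). -/
noncomputable def chiK : G →* adjoin F {ζ} where
  toFun g := ⟨χ g, hmem g⟩
  map_one' := by ext; simp
  map_mul' a b := by ext; simp

@[simp] lemma chiK_apply (g : G) : (chiK F ζ χ hmem g : ℂ) = χ g := rfl

/-- The F-algebra hom F[G] → F(ζ) induced by χ. -/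
noncomputable def phiA : MonoidAlgebra F G →ₐ[F] adjoin F {ζ} :=
  (MonoidAlgebra.lift F (adjoin F {ζ}) G) (chiK F ζ χ hmem)

/-- The auxiliary map F(ζ) → F[G]. -/
noncomputable def Efun (α : adjoin F {ζ}) : MonoidAlgebra F G :=
  (Fintype.card G : F)⁻¹ •
    ∑ g : G, MonoidAlgebra.single g⁻¹
      (Algebra.trace F (adjoin F {ζ}) (α * chiK F ζ χ hmem g))

lemma Efun_one :
    Efun F ζ χ hmem 1 = (Fintype.card G : F)⁻¹ •
      ∑ g : G, MonoidAlgebra.single g⁻¹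
        (Algebra.trace F (adjoin F {ζ}) ⟨χ g, hmem g⟩) := by
  simp [Efun, chiK]

lemma Efun_add (α β : adjoin F {ζ}) :
    Efun F ζ χ hmem (α + β) = Efun F ζ χ hmem α + Efun F ζ χ hmem β := by
  simp [Efun, add_mul, map_add, Finset.sum_add_distrib, smul_add]

lemma Efun_smul (c : F) (α : adjoin F {ζ}) :
    Efun F ζ χ hmem (c • α) = c • Efun F ζ χ hmem α := by
  simp only [Efun, smul_mul_assoc, map_smul, smul_eq_mul, ← MonoidAlgebra.smul_single',
    ← Finset.smul_sum]
  rw [smul_comm]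

lemma Efun_zero : Efun F ζ χ hmem 0 = 0 := by
  simp [Efun]

lemma single_mul_Efun (h : G) (c : F) (α : adjoin F {ζ}) :
    MonoidAlgebra.single h c * Efun F ζ χ hmem α
      = c • Efun F ζ χ hmem (chiK F ζ χ hmem h * α) := by
  simp only [Efun, Finset.smul_sum, Finset.mul_sum, mul_smul_comm]
  refine Fintype.sum_equiv (Equiv.mulRight h⁻¹) _ _ fun g => ?_
  simp only [Equiv.coe_mulRight, mul_inv_rev, inv_inv, MonoidAlgebra.single_mul_single, map_mul]
  rw [smul_comm c, ← MonoidAlgebra.smul_single']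
  have h1 : chiK F ζ χ hmem h * chiK F ζ χ hmem h⁻¹ = 1 := by
    rw [← map_mul, mul_inv_cancel, map_one]
  congr 4
  linear_combination (-(α * chiK F ζ χ hmem g)) * h1

lemma mul_Efun (x : MonoidAlgebra F G) (α : adjoin F {ζ}) :
    x * Efun F ζ χ hmem α = Efun F ζ χ hmem (phiA F ζ χ hmem x * α) := by
  induction x using MonoidAlgebra.induction_linear with
  | zero => simp [Efun_zero]
  | add f g hf hg => rw [add_mul, hf, hg, map_add, add_mul, Efun_add]
  | single g c =>
      rw [single_mul_Efun, phiA, MonoidAlgebra.lift_single, smul_mul_assoc, Efun_smul]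

open Finset in
lemma sum_sigma {k : ℕ} (hk0 : k ≠ 0) (hζ : IsPrimitiveRoot ζ k)
    (g₀ : G) (hg₀ : IsPrimitiveRoot (χ g₀) k)
    (hint : IsIntegral F ζ) (σ : (adjoin F {ζ}) →ₐ[F] ℂ) [Decidable (σ = (adjoin F {ζ}).val)] :
    ∑ g : G, σ (chiK F ζ χ hmem g) * χ g⁻¹
      = if σ = (adjoin F {ζ}).val then (Fintype.card G : ℂ) else 0 := by
  haveI := NeZero.mk hk0
  have hone : ∀ g : G, χ g * χ g⁻¹ = 1 := by
    intro g; rw [← map_mul, mul_inv_cancel, map_one]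
  split_ifs with hσ
  · subst hσ
    have : ∀ g : G, ((adjoin F {ζ}).val) (chiK F ζ χ hmem g) * χ g⁻¹ = 1 := by
      intro g; simpa using hone g
    calc ∑ g : G, ((adjoin F {ζ}).val) (chiK F ζ χ hmem g) * χ g⁻¹ = ∑ _g : G, (1:ℂ) :=
          Finset.sum_congr rfl fun g _ => this g
      _ = (Fintype.card G : ℂ) := by simp
  · -- σ ≠ val : find g₁ with σ (chiK g₁) ≠ χ g₁
    have hex : ∃ g₁ : G, σ (chiK F ζ χ hmem g₁) ≠ χ g₁ := by
      by_contra hall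
      push_neg at hall
      apply hσ
      obtain ⟨i, -, hi⟩ := hg₀.eq_pow_of_pow_eq_one hζ.pow_eq_one
      have hgen : IntermediateField.AdjoinSimple.gen F ζ = chiK F ζ χ hmem g₀ ^ i := by
        apply Subtype.coe_injective
        push_cast
        exact hi.symm
      apply (IntermediateField.adjoin.powerBasis hint).algHom_ext
      show σ (IntermediateField.AdjoinSimple.gen F ζ) = _
      rw [hgen, map_pow, hall]
      exact hi
    obtain ⟨g₁, hg₁⟩ := hex
    set ψ : G →* ℂ :=
      { toFun := fun g => σ (chiK F ζ χ hmem g) * χ g⁻¹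
        map_one' := by simp
        map_mul' := by
          intro a b
          simp only [map_mul, mul_inv_rev]
          ring } with hψ
    have hψg₁ : ψ g₁ ≠ 1 := by
      intro h1
      apply hg₁
      have h2 := hone g₁
      have h3 : σ (chiK F ζ χ hmem g₁) * χ g₁⁻¹ = 1 := h1
      linear_combination (χ g₁) * h3 - σ (chiK F ζ χ hmem g₁) * h2
    have key : ψ g₁ * ∑ g : G, ψ g = ∑ g : G, ψ g := by
      rw [Finset.mul_sum]
      refine Fintype.sum_equiv (Equiv.mulLeft g₁) _ _ fun g => ?_
      rw [← map_mul]
      rfl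
    have hz : ∑ g : G, ψ g = 0 := by
      by_contra hnz
      exact hψg₁ (mul_right_cancel₀ hnz (by rw [key, one_mul]))
    exact hz

lemma phiA_Efun {k : ℕ} (hk0 : k ≠ 0) (hζ : IsPrimitiveRoot ζ k)
    (g₀ : G) (hg₀ : IsPrimitiveRoot (χ g₀) k)
    (α : adjoin F {ζ}) :
    phiA F ζ χ hmem (Efun F ζ χ hmem α) = α := by
  classical
  have hint : IsIntegral F ζ := by
    refine IsIntegral.of_pow (Nat.pos_of_ne_zero hk0) ?_
    rw [hζ.pow_eq_one]; exact isIntegral_one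
  haveI : FiniteDimensional F (adjoin F {ζ}) := IntermediateField.adjoin.finiteDimensional hint
  have trace_coe : ∀ x : adjoin F {ζ}, (algebraMap F ℂ) (Algebra.trace F (adjoin F {ζ}) x)
      = ∑ σ : (adjoin F {ζ}) →ₐ[F] ℂ, σ x := fun x => trace_eq_sum_embeddings ℂ
  apply Subtype.coe_injective
  show ((adjoin F {ζ}).val) (phiA F ζ χ hmem (Efun F ζ χ hmem α)) = (α : ℂ)
  rw [← AlgHom.comp_apply]
  set τ := ((adjoin F {ζ}).val).comp (phiA F ζ χ hmem) with hτdef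
  have hτ : ∀ (g : G) (c : F), τ (MonoidAlgebra.single g c) = algebraMap F ℂ c * χ g := by
    intro g c
    rw [hτdef, AlgHom.comp_apply, phiA, MonoidAlgebra.lift_single, Algebra.smul_def, map_mul]
    congr 1
  rw [Efun, map_smul, map_sum]
  have hterm : ∀ g : G, τ (MonoidAlgebra.single g⁻¹
        (Algebra.trace F (adjoin F {ζ}) (α * chiK F ζ χ hmem g)))
      = ∑ σ : (adjoin F {ζ}) →ₐ[F] ℂ, σ α * (σ (chiK F ζ χ hmem g) * χ g⁻¹) := by
    intro g
    rw [hτ, trace_coe, Finset.sum_mul]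
    exact Finset.sum_congr rfl fun σ _ => by rw [map_mul]; ring
  rw [Finset.sum_congr rfl fun g _ => hterm g, Finset.sum_comm]
  have hin : ∀ σ : (adjoin F {ζ}) →ₐ[F] ℂ,
      ∑ g : G, σ α * (σ (chiK F ζ χ hmem g) * χ g⁻¹)
      = if σ = (adjoin F {ζ}).val then σ α * (Fintype.card G : ℂ) else 0 := by
    intro σ
    rw [← Finset.mul_sum, sum_sigma F ζ χ hmem hk0 hζ g₀ hg₀ hint σ]
    split_ifs <;> simp
  rw [Finset.sum_congr rfl fun σ _ => hin σ, Finset.sum_ite_eq' Finset.univ ((adjoin F {ζ}).val)]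
  simp only [Finset.mem_univ, if_true]
  have hcard : (Fintype.card G : ℂ) ≠ 0 := Nat.cast_ne_zero.mpr Fintype.card_ne_zero
  rw [Algebra.smul_def]
  have hmapinv : algebraMap F ℂ ((Fintype.card G : F)⁻¹) = (Fintype.card G : ℂ)⁻¹ := by
    rw [map_inv₀, map_natCast]
  rw [hmapinv]
  show (Fintype.card G : ℂ)⁻¹ * ((α : ℂ) * (Fintype.card G : ℂ)) = (α : ℂ)
  field_simp

lemma phiA_surjective {k : ℕ} (hk0 : k ≠ 0) (hζ : IsPrimitiveRoot ζ k)
    (g₀ : G) (hg₀ : IsPrimitiveRoot (χ g₀) k) :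
    Function.Surjective (phiA F ζ χ hmem) := by
  intro α
  exact ⟨Efun F ζ χ hmem α, phiA_Efun F ζ χ hmem hk0 hζ g₀ hg₀ α⟩

end Aux

/-- An element `e` of a ring is a primitive central idempotent if it is a nonzero central
idempotent which cannot be decomposed: every central idempotent `f` below `e` is `0` or `e`. -/
def IsPrimitiveCentralIdempotent {R : Type*} [Ring R] (e : R) : Prop :=
  e ≠ 0 ∧ e * e = e ∧ e ∈ Set.center R ∧
    ∀ f : R, f * f = f → f ∈ Set.center R → e * f = f → f = 0 ∨ f = e

/-- for a finite abelian group `G`, a number field `F ⊆ ℂ`, a subgroup `N`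
with `G/N` cyclic of order `k` and a faithful character `χ` of `G/N` (realized as a character
of `G` with kernel `N`, with values in `F(ζ_k)`), the element
`ε_C(G,N) = (1/|G|) ∑_g Tr_{F(ζ_k)/F}(χ(gN)) g⁻¹` is a primitive central idempotent of `FG`
and `FG·ε_C(G,N) ≅ F(ζ_k)` as `F`-algebras. -/
theorem stmt3 (G : Type*) [CommGroup G] [Fintype G]
    (F : IntermediateField ℚ ℂ) [FiniteDimensional ℚ F]
    (N : Subgroup G) (k : ℕ) (hk : Nat.card (G ⧸ N) = k) (hcyc : IsCyclic (G ⧸ N))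
    (ζ : ℂ) (hζ : IsPrimitiveRoot ζ k)
    (χ : G →* ℂ) (hker : ∀ g : G, χ g = 1 ↔ g ∈ N)
    (hmem : ∀ g : G, χ g ∈ IntermediateField.adjoin F {ζ}) :
    IsPrimitiveCentralIdempotent
      ((Fintype.card G : F)⁻¹ •
        ∑ g : G, MonoidAlgebra.single g⁻¹
          (Algebra.trace F (IntermediateField.adjoin F {ζ}) ⟨χ g, hmem g⟩)) ∧
    Nonempty
      ((MonoidAlgebra F G ⧸ Ideal.span {1 - (Fintype.card G : F)⁻¹ •
          ∑ g : G, MonoidAlgebra.single g⁻¹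
            (Algebra.trace F (IntermediateField.adjoin F {ζ}) ⟨χ g, hmem g⟩)})
        ≃ₐ[F] (IntermediateField.adjoin F {ζ})) := by
  classical
  -- basic facts
  have hone : ∀ g : G, χ g * χ g⁻¹ = 1 := by
    intro g; rw [← map_mul, mul_inv_cancel, map_one]
  haveI : Finite (G ⧸ N) := Quotient.finite _
  have hk0 : k ≠ 0 := by rw [← hk]; exact Nat.card_pos.ne'
  -- a group element whose character value is a primitive k-th root of unity
  obtain ⟨c, hc⟩ := hcyc.exists_generator
  obtain ⟨g₀, rfl⟩ := QuotientGroup.mk_surjective c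
  set χbar : G ⧸ N →* ℂ := QuotientGroup.lift N χ (fun g hg => (hker g).mpr hg) with hχbar
  have hinj : Function.Injective χbar := by
    intro a b
    induction a using QuotientGroup.induction_on with | H a =>
    induction b using QuotientGroup.induction_on with | H b =>
    intro hab
    have hab' : χ a = χ b := hab
    rw [QuotientGroup.eq]
    apply (hker _).mp
    have ha0 : χ a ≠ 0 := left_ne_zero_of_mul_eq_one (hone a)
    apply mul_left_cancel₀ ha0
    rw [← map_mul, mul_inv_cancel_left, mul_one, hab']
  have h1 : orderOf ((g₀ : G ⧸ N)) = k := by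
    rw [orderOf_eq_card_of_forall_mem_zpowers hc, hk]
  have h2 : orderOf (χ g₀) = k := by
    have := orderOf_injective χbar hinj ((g₀ : G ⧸ N))
    rw [h1] at this
    exact this
  have hg₀ : IsPrimitiveRoot (χ g₀) k := h2 ▸ IsPrimitiveRoot.orderOf (χ g₀)
  -- the idempotent
  set ε : MonoidAlgebra F G := (Fintype.card G : F)⁻¹ •
      ∑ g : G, MonoidAlgebra.single g⁻¹
        (Algebra.trace F (IntermediateField.adjoin F {ζ}) ⟨χ g, hmem g⟩) with hεdef
  have hε : ε = Efun F ζ χ hmem 1 := (Efun_one F ζ χ hmem).symm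
  have hφε : phiA F ζ χ hmem ε = 1 := by
    rw [hε]; exact phiA_Efun F ζ χ hmem hk0 hζ g₀ hg₀ 1
  have hmul : ∀ x : MonoidAlgebra F G, x * ε = Efun F ζ χ hmem (phiA F ζ χ hmem x) := by
    intro x; rw [hε, mul_Efun, mul_one]
  have hidem : ε * ε = ε := by
    rw [hmul ε, hφε, hε]
  have hnz : ε ≠ 0 := by
    intro h
    rw [h, map_zero] at hφε
    exact zero_ne_one hφε
  have hkernel : RingHom.ker (phiA F ζ χ hmem) = Ideal.span {1 - ε} := by
    apply le_antisymm
    · intro x hx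
      have hx0 : phiA F ζ χ hmem x = 0 := hx
      have hxε : x * ε = 0 := by
        rw [hmul x, hx0, Efun_zero]
      have : x = x * (1 - ε) := by rw [mul_sub, mul_one, hxε, sub_zero]
      exact Ideal.mem_span_singleton'.mpr ⟨x, this.symm⟩
    · rw [Ideal.span_le, Set.singleton_subset_iff]
      show 1 - ε ∈ RingHom.ker (phiA F ζ χ hmem)
      rw [RingHom.mem_ker, map_sub, map_one, hφε, sub_self]
  constructor
  · refine ⟨hnz, hidem, ?_, ?_⟩
    · rw [Set.center_eq_univ]; exact Set.mem_univ _
    · intro f hf hfc hεf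
      rcases mul_eq_zero.mp (show phiA F ζ χ hmem f * (phiA F ζ χ hmem f - 1) = 0 by
        have : phiA F ζ χ hmem f * phiA F ζ χ hmem f = phiA F ζ χ hmem f := by
          rw [← map_mul, hf]
        linear_combination this) with h0 | h1'
      · -- φ f = 0 : f = 0
        left
        have : f ∈ Ideal.span {1 - ε} := by
          rw [← hkernel, RingHom.mem_ker]; exact h0
        obtain ⟨y, hy⟩ := Ideal.mem_span_singleton'.mp this
        have : f * ε = 0 := by
          rw [← hy, mul_assoc, sub_mul, one_mul, hidem, sub_self, mul_zero]
        rw [← hεf, mul_comm, this]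
      · -- φ f = 1 : f = ε
        right
        have hf1 : phiA F ζ χ hmem f = 1 := by linear_combination h1'
        have : ε - f ∈ Ideal.span {1 - ε} := by
          rw [← hkernel, RingHom.mem_ker, map_sub, hφε, hf1, sub_self]
        obtain ⟨y, hy⟩ := Ideal.mem_span_singleton'.mp this
        have hz : (ε - f) * ε = 0 := by
          rw [← hy, mul_assoc, sub_mul, one_mul, hidem, sub_self, mul_zero]
        rw [sub_mul, hidem, mul_comm, hεf, sub_eq_zero] at hz
        exact hz.symm
  · refine ⟨?_⟩
    have hsurj : Function.Surjective (phiA F ζ χ hmem) :=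
      phiA_surjective F ζ χ hmem hk0 hζ g₀ hg₀
    exact (Ideal.quotientEquivAlgOfEq F hkernel.symm).trans
      (Ideal.quotientKerAlgEquivOfSurjective hsurj)
end

section
/- Let G be a finite group with a normal subgroup N such that G/N is cyclic of order k, and let F be a number field. Then for each Galois orbit C of faithful characters of G/N, the element ε_C(G,N) is a primitive central idempotent of FG with FG·ε_C(G,N) ≅ F(ζ_k). Moreover, for two orbits C and D, ε_C(G,N) = ε_D(G,N) if and only if C = D. -/
set_option synthInstance.maxHeartbeats 1000000
set_option maxHeartbeats 1000000

open IntermediateField Finset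
set_option linter.unusedSectionVars false

lemma MA_single_finset_sum {R M ι : Type*} [Semiring R] (a : M) (s : Finset ι) (f : ι → R) :
    MonoidAlgebra.single a (∑ b ∈ s, f b) = ∑ b ∈ s, MonoidAlgebra.single a (f b) := by
  apply MonoidAlgebra.ext
  simp only [MonoidAlgebra.coeff_single, MonoidAlgebra.coeff_sum]
  exact Finsupp.single_finset_sum _ _ _

section Eps
variable {G : Type*} [Group G] [Fintype G] {L : Type*} [Field L]

noncomputable def eps (η : G →* L) : MonoidAlgebra L G :=
  (Fintype.card G : L)⁻¹ • ∑ g : G, MonoidAlgebra.single g⁻¹ (η g)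

lemma char_sum_eq (η : G →* L) (hη : η ≠ 1) : ∑ g : G, η g = 0 := by
  obtain ⟨g₀, hg₀⟩ : ∃ g₀, η g₀ ≠ 1 := by
    by_contra h
    push_neg at h
    exact hη (MonoidHom.ext fun g => by simp [h g])
  have h1 : η g₀ * ∑ g : G, η g = ∑ g : G, η g := by
    rw [Finset.mul_sum]
    exact Fintype.sum_bijective (fun g => g₀ * g) (Group.mulLeft_bijective g₀) _ _
      (fun g => by rw [map_mul])
  have h2 : (η g₀ - 1) * ∑ g : G, η g = 0 := by
    rw [sub_mul, one_mul, h1, sub_self]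
  rcases mul_eq_zero.mp h2 with h | h
  · exact absurd (sub_eq_zero.mp h) hg₀
  · exact h

/-- The "quotient" character `g ↦ η g * η' g⁻¹`. -/
def charDiv (η η' : G →* L) : G →* L where
  toFun g := η g * η' g⁻¹
  map_one' := by simp
  map_mul' a b := by
    simp only [map_mul, mul_inv_rev]
    ring

omit [Fintype G] in
lemma charDiv_ne_one {η η' : G →* L} (h : η ≠ η') : charDiv η η' ≠ 1 := by
  intro hc
  apply h
  ext g
  have hg := DFunLike.congr_fun hc g
  simp only [charDiv, MonoidHom.coe_mk, OneHom.coe_mk, MonoidHom.one_apply] at hg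
  have h2 : η' g⁻¹ * η' g = 1 := by rw [← map_mul, inv_mul_cancel, map_one]
  calc η g = η g * (η' g⁻¹ * η' g) := by rw [h2, mul_one]
    _ = (η g * η' g⁻¹) * η' g := by ring
    _ = η' g := by rw [hg, one_mul]

lemma char_orth {η η' : G →* L} (h : η ≠ η') : ∑ g : G, η g * η' g⁻¹ = 0 :=
  char_sum_eq (charDiv η η') (charDiv_ne_one h)

open scoped Classical in
lemma eps_mul_eps (hn : (Fintype.card G : L) ≠ 0) (η η' : G →* L) :
    eps η * eps η' = if η = η' then eps η' else 0 := by
  classical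
  have key : (∑ g : G, (MonoidAlgebra.single g⁻¹ (η g) : MonoidAlgebra L G)) *
      (∑ h : G, (MonoidAlgebra.single h⁻¹ (η' h) : MonoidAlgebra L G)) =
      ∑ t : G, (MonoidAlgebra.single t⁻¹ (η' t * ∑ g : G, η g * η' g⁻¹) : MonoidAlgebra L G) := by
    rw [Finset.sum_mul_sum]
    have step : ∀ g : G, ∑ h : G, (MonoidAlgebra.single g⁻¹ (η g) : MonoidAlgebra L G) *
        MonoidAlgebra.single h⁻¹ (η' h) =
        ∑ t : G, (MonoidAlgebra.single t⁻¹ (η' t * (η g * η' g⁻¹)) : MonoidAlgebra L G) := by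
      intro g
      refine Fintype.sum_bijective (fun h => h * g) (Group.mulRight_bijective g) _ _ ?_
      intro h
      rw [MonoidAlgebra.single_mul_single]
      have hgg : η' g * η' g⁻¹ = 1 := by rw [← map_mul, mul_inv_cancel, map_one]
      congr 1
      · simp [mul_assoc]
      · rw [map_mul]
        linear_combination (-(η g * η' h)) * hgg
    rw [Finset.sum_congr rfl (fun g _ => step g), Finset.sum_comm]
    refine Finset.sum_congr rfl fun t _ => ?_
    rw [← MA_single_finset_sum, ← Finset.mul_sum]
  rw [eps, eps, smul_mul_smul_comm, key]
  by_cases hee : η = η'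
  · subst hee
    rw [if_pos rfl]
    have horth : ∑ g : G, η g * η g⁻¹ = (Fintype.card G : L) := by
      rw [Finset.sum_congr rfl (fun g _ => by rw [← map_mul, mul_inv_cancel, map_one])]
      simp
    rw [horth]
    have hsm : (∑ t : G, (MonoidAlgebra.single t⁻¹ (η t * (Fintype.card G : L)) : MonoidAlgebra L G))
        = (Fintype.card G : L) • ∑ t : G, (MonoidAlgebra.single t⁻¹ (η t) : MonoidAlgebra L G) := by
      rw [Finset.smul_sum]
      exact Finset.sum_congr rfl fun t _ => by rw [MonoidAlgebra.smul_single, smul_eq_mul, mul_comm]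
    rw [hsm, smul_smul]
    congr 1
    field_simp
  · rw [if_neg hee, char_orth hee]
    simp

lemma mul_eps (η : G →* L) (x : MonoidAlgebra L G) :
    x * eps η = (MonoidAlgebra.lift L L G η) x • eps η := by
  induction x using MonoidAlgebra.induction_linear with
  | zero => simp
  | add f g hf hg => rw [add_mul, hf, hg, map_add, add_smul]
  | single h c =>
    have key : (MonoidAlgebra.single h c : MonoidAlgebra L G) *
        (∑ g : G, (MonoidAlgebra.single g⁻¹ (η g) : MonoidAlgebra L G)) =
        (c * η h) • ∑ g : G, (MonoidAlgebra.single g⁻¹ (η g) : MonoidAlgebra L G) := by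
      rw [Finset.mul_sum, Finset.smul_sum]
      refine Fintype.sum_bijective (fun u => u * h⁻¹) (Group.mulRight_bijective h⁻¹) _ _ ?_
      intro u
      rw [MonoidAlgebra.single_mul_single, MonoidAlgebra.smul_single]
      have hh : η h * η h⁻¹ = 1 := by rw [← map_mul, mul_inv_cancel, map_one]
      congr 1
      · simp [mul_inv_rev]
      · rw [smul_eq_mul, map_mul]
        linear_combination (-(c * η u)) * hh
    rw [eps, mul_smul_comm, key, MonoidAlgebra.lift_single, smul_smul, smul_smul]
    congr 1
    rw [smul_eq_mul]
    ring

lemma eps_apply_one (η : G →* L) : (eps η : MonoidAlgebra L G).coeff 1 = (Fintype.card G : L)⁻¹ := by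
  classical
  rw [eps, MonoidAlgebra.coeff_smul_apply, MonoidAlgebra.coeff_sum, Finsupp.finset_sum_apply]
  rw [Finset.sum_eq_single 1]
  · simp
  · intro g _ hg
    rw [MonoidAlgebra.coeff_single, Finsupp.single_apply, if_neg (by simpa using hg)]
  · simp

lemma eps_ne_zero (hn : (Fintype.card G : L) ≠ 0) (η : G →* L) : eps η ≠ 0 := by
  intro h
  have := eps_apply_one η
  rw [h] at this
  simp only [MonoidAlgebra.coeff_zero, Finsupp.coe_zero, Pi.zero_apply] at this
  exact hn (by rw [← inv_inv (Fintype.card G : L), ← this, inv_zero])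

end Eps

section Specific

variable {G : Type*} [Group G] [Fintype G]

/-- Restrict a character with values in an intermediate field. -/
def charToSub {F K : Type*} [Field F] [Field K] [Algebra F K] (S : IntermediateField F K)
    (χ : G →* K) (hmem : ∀ g, χ g ∈ S) : G →* S where
  toFun g := ⟨χ g, hmem g⟩
  map_one' := by ext; simp
  map_mul' a b := by ext; simp

/-- Composition of a character with a Galois automorphism. -/
def conjChar {F E : Type*} [CommSemiring F] [Semiring E] [Algebra F E]
    (σ : E ≃ₐ[F] E) (η : G →* E) : G →* E :=
  ((σ : E →ₐ[F] E) : E →+* E).toMonoidHom.comp η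

@[simp] lemma conjChar_apply {F E : Type*} [CommSemiring F] [Semiring E] [Algebra F E]
    (σ : E ≃ₐ[F] E) (η : G →* E) (g : G) : conjChar σ η g = σ (η g) := rfl

/-- Coefficient extension of monoid algebras. -/
noncomputable def iotaMA (F E : Type*) [CommSemiring F] [CommSemiring E] [Algebra F E]
    (G : Type*) [Group G] : MonoidAlgebra F G →ₐ[F] MonoidAlgebra E G :=
  (MonoidAlgebra.lift F (MonoidAlgebra E G) G) (MonoidAlgebra.of E G)

lemma iotaMA_single {F E : Type*} [CommSemiring F] [CommSemiring E] [Algebra F E]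
    (g : G) (r : F) :
    iotaMA F E G (MonoidAlgebra.single g r) = MonoidAlgebra.single g (algebraMap F E r) := by
  rw [iotaMA, MonoidAlgebra.lift_single, MonoidAlgebra.of_apply]
  rw [MonoidAlgebra.smul_single]
  congr 1
  rw [Algebra.smul_def, mul_one]

lemma iotaMA_apply {F E : Type*} [CommSemiring F] [CommSemiring E] [Algebra F E]
    (x : MonoidAlgebra F G) (g : G) :
    (iotaMA F E G x).coeff g = algebraMap F E (x.coeff g) := by
  classical
  induction x using MonoidAlgebra.induction_linear with
  | zero => simp
  | add f g hf hg => rw [map_add, MonoidAlgebra.coeff_add, Finsupp.add_apply, hf, hg, MonoidAlgebra.coeff_add, Finsupp.add_apply, map_add]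
  | single h c =>
    rw [iotaMA_single, MonoidAlgebra.coeff_single, MonoidAlgebra.coeff_single, Finsupp.single_apply, Finsupp.single_apply]
    split <;> simp

lemma iotaMA_injective {F E : Type*} [Field F] [Field E] [Algebra F E] :
    Function.Injective (iotaMA F E G) := by
  intro x y h
  ext g
  have := congrArg (fun z => (z : MonoidAlgebra E G).coeff g) h
  simp only [iotaMA_apply] at this
  exact (algebraMap F E).injective this

end Specific

section Main

variable {G : Type*} [Group G] [Fintype G]

lemma fdE (F : IntermediateField ℚ ℂ) {k : ℕ} {ζ : ℂ} (hk0 : k ≠ 0)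
    (hζ : IsPrimitiveRoot ζ k) : FiniteDimensional F (adjoin F {ζ}) := by
  have hint : IsIntegral F ζ := by
    refine IsIntegral.of_pow (Nat.pos_of_ne_zero hk0) ?_
    rw [hζ.pow_eq_one]
    exact isIntegral_one
  exact adjoin.finiteDimensional hint

lemma galE (F : IntermediateField ℚ ℂ) {k : ℕ} {ζ : ℂ} (hk0 : k ≠ 0)
    (hζ : IsPrimitiveRoot ζ k) : IsGalois F (adjoin F {ζ}) := by
  have hζ' : IsPrimitiveRoot ζ ((⟨k, Nat.pos_of_ne_zero hk0⟩ : ℕ+) : ℕ) := hζ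
  have hint : IsIntegral F ζ := by
    refine IsIntegral.of_pow (Nat.pos_of_ne_zero hk0) ?_
    rw [hζ.pow_eq_one]
    exact isIntegral_one
  have H := IntermediateField.adjoin_simple_toSubalgebra_of_isAlgebraic (F := F) hint.isAlgebraic
  haveI : NeZero k := ⟨hk0⟩
  have : IsCyclotomicExtension {k} F (adjoin F {ζ}) := by
    refine IsCyclotomicExtension.equiv _ _ _ (h := ?_)
      (.refl : (adjoin F {ζ}).toSubalgebra ≃ₐ[F] _)
    rw [H]
    exact hζ.adjoin_isCyclotomicExtension F
  exact IsCyclotomicExtension.isGalois {k} F _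

lemma trace_aut {K L : Type*} [Field K] [Field L] [Algebra K L] [FiniteDimensional K L]
    [IsGalois K L] (σ : L ≃ₐ[K] L) (x : L) : Algebra.trace K L (σ x) = Algebra.trace K L x := by
  apply (algebraMap K L).injective
  rw [trace_eq_sum_automorphisms, trace_eq_sum_automorphisms]
  exact Fintype.sum_bijective (fun τ => τ * σ) (Group.mulRight_bijective σ) _ _
    (fun τ => by simp [AlgEquiv.mul_apply])

lemma exists_primroot (N : Subgroup G) [N.Normal] {k : ℕ} (hk : Nat.card (G ⧸ N) = k)
    (hcyc : IsCyclic (G ⧸ N)) (χ : G →* ℂ) (hker : ∀ g : G, χ g = 1 ↔ g ∈ N) :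
    ∃ g₀ : G, IsPrimitiveRoot (χ g₀) k := by
  classical
  haveI : Fintype (G ⧸ N) := Fintype.ofFinite _
  obtain ⟨q, hq⟩ := hcyc.exists_generator
  obtain ⟨g₀, rfl⟩ := QuotientGroup.mk'_surjective N q
  refine ⟨g₀, ?_⟩
  have hle : N ≤ χ.ker := fun g hg => (hker g).mpr hg
  set χbar := QuotientGroup.lift N χ hle with hχbar
  have hinj : Function.Injective χbar := by
    rw [injective_iff_map_eq_one]
    intro a ha
    obtain ⟨g, rfl⟩ := QuotientGroup.mk'_surjective N a
    have hg : χ g = 1 := ha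
    rw [QuotientGroup.mk'_apply, QuotientGroup.eq_one_iff]
    exact (hker g).mp hg
  have h1 : orderOf (χ g₀) = k := by
    have h2 : χ g₀ = χbar ((QuotientGroup.mk' N) g₀) := rfl
    rw [h2, orderOf_injective χbar hinj, orderOf_eq_card_of_forall_mem_zpowers hq,
      hk]
  rw [← h1]
  exact IsPrimitiveRoot.orderOf _

lemma adjoin_top (F : IntermediateField ℚ ℂ) {k : ℕ} {ζ : ℂ} (hk0 : k ≠ 0)
    (hζ : IsPrimitiveRoot ζ k) :
    Algebra.adjoin F {(⟨ζ, subset_adjoin F {ζ} rfl⟩ : adjoin F {ζ})} = ⊤ := by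
  have hint : IsIntegral F ζ := by
    refine IsIntegral.of_pow (Nat.pos_of_ne_zero hk0) ?_
    rw [hζ.pow_eq_one]
    exact isIntegral_one
  have H : (adjoin F {ζ}).toSubalgebra = Algebra.adjoin F {ζ} :=
    IntermediateField.adjoin_simple_toSubalgebra_of_isAlgebraic hint.isAlgebraic
  rw [eq_top_iff]
  rintro ⟨x, hx⟩ -
  have hx' : x ∈ Algebra.adjoin F {ζ} := by rw [← H]; exact hx
  have hmap : Subalgebra.map (adjoin F {ζ}).val
      (Algebra.adjoin F {(⟨ζ, subset_adjoin F {ζ} rfl⟩ : adjoin F {ζ})}) =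
      Algebra.adjoin F {ζ} := by
    rw [AlgHom.map_adjoin]
    congr 1
    simp
  rw [← hmap] at hx'
  obtain ⟨y, hy, hyx⟩ := hx'
  have hyx' : y = ⟨x, hx⟩ := Subtype.ext hyx
  exact hyx' ▸ hy

end Main

section Main2

variable {G : Type*} [Group G] [Fintype G]

lemma conj_inj (F : IntermediateField ℚ ℂ) {k : ℕ} {ζ : ℂ} (hk0 : k ≠ 0)
    (hζ : IsPrimitiveRoot ζ k) (χ : G →* ℂ) (hmem : ∀ g : G, χ g ∈ adjoin F {ζ})
    (g₀ : G) (hg₀ : IsPrimitiveRoot (χ g₀) k) :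
    Function.Injective (fun σ : (adjoin F {ζ}) ≃ₐ[F] (adjoin F {ζ}) =>
      conjChar σ (charToSub (adjoin F {ζ}) χ hmem)) := by
  haveI : NeZero k := ⟨hk0⟩
  obtain ⟨i, -, hi⟩ := hg₀.eq_pow_of_pow_eq_one hζ.pow_eq_one
  set E := adjoin F {ζ}
  set χE := charToSub E χ hmem with hχE
  set ζE : E := ⟨ζ, subset_adjoin F {ζ} rfl⟩ with hζE
  intro σ τ h
  have hiE : χE g₀ ^ i = ζE := by
    apply Subtype.ext
    push_cast
    exact hi
  have hστ : σ ζE = τ ζE := by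
    rw [← hiE, map_pow, map_pow]
    congr 1
    have h' := DFunLike.congr_fun h g₀
    simpa using h'
  have hle : Algebra.adjoin F {ζE} ≤ AlgHom.equalizer (σ : E →ₐ[F] E) (τ : E →ₐ[F] E) :=
    Algebra.adjoin_le (Set.singleton_subset_iff.mpr hστ)
  rw [adjoin_top F hk0 hζ] at hle
  refine AlgEquiv.ext fun x => ?_
  have hx := hle (Algebra.mem_top (R := F) (A := E) (x := x))
  rw [AlgHom.mem_equalizer] at hx
  simpa using hx

end Main2

section MasterGen

variable {G : Type*} [Group G] [Fintype G]

theorem masterGen (F E : Type*) [Field F] [Field E] [Algebra F E]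
    [FiniteDimensional F E] [IsGalois F E]
    (hnF : ((Fintype.card G : ℕ) : F) ≠ 0) (hnE : ((Fintype.card G : ℕ) : E) ≠ 0)
    (χE : G →* E)
    (hinj : Function.Injective fun σ : E ≃ₐ[F] E => conjChar σ χE)
    (hsur : ∀ y : E, y ∈ ((MonoidAlgebra.lift F E G) χE).range) :
    IsPrimitiveCentralIdempotent
      ((Fintype.card G : F)⁻¹ • ∑ g : G, MonoidAlgebra.single g⁻¹
        (Algebra.trace F E (χE g))) ∧
    (Function.Surjective ((MonoidAlgebra.lift F E G) χE) ∧
      ∀ x : MonoidAlgebra F G, ((MonoidAlgebra.lift F E G) χE) x = 0 ↔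
        x * ((Fintype.card G : F)⁻¹ • ∑ g : G, MonoidAlgebra.single g⁻¹
          (Algebra.trace F E (χE g))) = 0) := by
  classical
  set e : MonoidAlgebra F G :=
    ((Fintype.card G : ℕ) : F)⁻¹ • ∑ g : G, MonoidAlgebra.single g⁻¹ (Algebra.trace F E (χE g))
    with he
  set fhat : MonoidAlgebra F G →ₐ[F] E := (MonoidAlgebra.lift F E G) χE with hfhat
  -- smul bridging
  have hsmul : ∀ y : MonoidAlgebra E G,
      ((Fintype.card G : ℕ) : F)⁻¹ • y = ((Fintype.card G : ℕ) : E)⁻¹ • y := by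
    intro y
    rw [← algebraMap_smul E (((Fintype.card G : ℕ) : F)⁻¹) y, map_inv₀, map_natCast]
  -- L1
  have hiota_e : iotaMA F E G e = ∑ σ : E ≃ₐ[F] E, eps (conjChar σ χE) := by
    rw [he, map_smul, map_sum]
    have h1 : ∀ g : G, iotaMA F E G (MonoidAlgebra.single g⁻¹ (Algebra.trace F E (χE g))) =
        ∑ σ : E ≃ₐ[F] E, MonoidAlgebra.single g⁻¹ (σ (χE g)) := by
      intro g
      rw [iotaMA_single, trace_eq_sum_automorphisms]
      exact MA_single_finset_sum _ _ _
    rw [Finset.sum_congr rfl fun g _ => h1 g, Finset.sum_comm, hsmul, Finset.smul_sum]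
    refine Finset.sum_congr rfl fun σ _ => ?_
    rw [eps]
    rfl
  have hcomp : ∀ σ : E ≃ₐ[F] E, ∀ x : MonoidAlgebra F G,
      (MonoidAlgebra.lift E E G (conjChar σ χE)) (iotaMA F E G x) = σ (fhat x) := by
    intro σ x
    induction x using MonoidAlgebra.induction_linear with
    | zero => rw [map_zero, map_zero, map_zero, map_zero]
    | add f g hf hg => rw [map_add, map_add, map_add, map_add, hf, hg]
    | single g c =>
      rw [iotaMA_single, MonoidAlgebra.lift_single, hfhat, MonoidAlgebra.lift_single,
        conjChar_apply, map_smul, algebraMap_smul]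
  have hmul : ∀ x : MonoidAlgebra F G, iotaMA F E G x * iotaMA F E G e =
      ∑ σ : E ≃ₐ[F] E, σ (fhat x) • eps (conjChar σ χE) := by
    intro x
    rw [hiota_e, Finset.mul_sum]
    exact Finset.sum_congr rfl fun σ _ => by rw [mul_eps, hcomp σ x]
  -- annihilator characterization
  have hann : ∀ x : MonoidAlgebra F G, fhat x = 0 ↔ x * e = 0 := by
    intro x
    constructor
    · intro hx
      apply iotaMA_injective (F := F) (E := E)
      rw [map_mul, hmul, map_zero]
      refine Finset.sum_eq_zero fun σ _ => ?_
      rw [hx, map_zero, zero_smul]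
    · intro hx
      have h0 : ∑ σ : E ≃ₐ[F] E, σ (fhat x) • eps (conjChar σ χE) = 0 := by
        rw [← hmul, ← map_mul, hx, map_zero]
      have h1 := congrArg (fun z => z * eps (conjChar (1 : E ≃ₐ[F] E) χE)) h0
      simp only [Finset.sum_mul, smul_mul_assoc, zero_mul] at h1
      rw [Finset.sum_eq_single (1 : E ≃ₐ[F] E)] at h1
      · rw [eps_mul_eps hnE, if_pos rfl, AlgEquiv.one_apply] at h1
        rcases smul_eq_zero.mp h1 with h | h
        · exact h
        · exact absurd h (eps_ne_zero hnE _)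
      · intro σ _ hσ
        rw [eps_mul_eps hnE, if_neg (fun hc => hσ (hinj hc)), smul_zero]
      · intro hc
        exact absurd (Finset.mem_univ _) hc
  -- idempotency
  have hee : e * e = e := by
    apply iotaMA_injective (F := F) (E := E)
    rw [map_mul, hiota_e, Finset.sum_mul]
    refine Finset.sum_congr rfl fun σ _ => ?_
    rw [Finset.mul_sum]
    rw [Finset.sum_eq_single σ]
    · rw [eps_mul_eps hnE, if_pos rfl]
    · intro τ _ hτ
      rw [eps_mul_eps hnE, if_neg (fun hc => hτ (hinj hc).symm)]
    · intro hc
      exact absurd (Finset.mem_univ _) hc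
  -- nonzero
  have hne : e ≠ 0 := by
    intro h0
    have h1 : (0 : MonoidAlgebra E G) = ∑ σ : E ≃ₐ[F] E, eps (conjChar σ χE) := by
      rw [← hiota_e, h0, map_zero]
    have h2 := congrArg (fun z => z * eps (conjChar (1 : E ≃ₐ[F] E) χE)) h1
    simp only [zero_mul, Finset.sum_mul] at h2
    rw [Finset.sum_eq_single (1 : E ≃ₐ[F] E)] at h2
    · rw [eps_mul_eps hnE, if_pos rfl] at h2
      exact (eps_ne_zero hnE _) h2.symm
    · intro σ _ hσ
      rw [eps_mul_eps hnE, if_neg (fun hc => hσ (hinj hc))]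
    · intro hc
      exact absurd (Finset.mem_univ _) hc
  -- centrality
  have hclass : ∀ h g : G, Algebra.trace F E (χE (h * g * h⁻¹)) = Algebra.trace F E (χE g) := by
    intro h g
    congr 1
    have hh : χE h * χE h⁻¹ = 1 := by rw [← map_mul, mul_inv_cancel, map_one]
    rw [map_mul, map_mul]
    linear_combination χE g * hh
  have hcen_single : ∀ (h : G) (c : F),
      MonoidAlgebra.single h c * e = e * MonoidAlgebra.single h c := by
    intro h c
    rw [he, mul_smul_comm, smul_mul_assoc, Finset.mul_sum, Finset.sum_mul]
    congr 1
    refine Fintype.sum_bijective (fun u => h * u * h⁻¹) ((MulAut.conj h).bijective) _ _ ?_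
    intro u
    rw [MonoidAlgebra.single_mul_single, MonoidAlgebra.single_mul_single]
    rw [hclass h u]
    congr 1
    · group
    · ring
  have hcen : e ∈ Set.center (MonoidAlgebra F G) := by
    rw [Semigroup.mem_center_iff]
    intro x
    induction x using MonoidAlgebra.induction_linear with
    | zero => rw [zero_mul, mul_zero]
    | add f g hf hg => rw [add_mul, mul_add, hf, hg]
    | single h c => exact hcen_single h c
  -- primitivity
  have hprim : ∀ f : MonoidAlgebra F G, f * f = f → f ∈ Set.center (MonoidAlgebra F G) →
      e * f = f → f = 0 ∨ f = e := by
    intro f hf hfc hef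
    rw [Semigroup.mem_center_iff] at hfc
    have hfe : f * e = f := by rw [← hfc e, hef]
    have he1 : fhat e = 1 := by
      have h2 : fhat e ≠ 0 := by
        intro hc
        exact hne (by rw [← hee]; exact (hann e).mp hc)
      have h3 : fhat e * fhat e = fhat e := by rw [← map_mul, hee]
      exact mul_left_cancel₀ h2 (by rw [h3, mul_one] : fhat e * fhat e = fhat e * 1)
    have hidem : fhat f * (fhat f - 1) = 0 := by
      rw [mul_sub, mul_one, ← map_mul, hf, sub_self]
    rcases mul_eq_zero.mp hidem with h | h
    · left
      rw [← hfe]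
      exact (hann f).mp h
    · right
      have h4 : fhat (e - f) = 0 := by
        rw [map_sub, he1, sub_eq_zero]
        exact (sub_eq_zero.mp h).symm
      have h5 := (hann _).mp h4
      rw [sub_mul, hee, hfe, sub_eq_zero] at h5
      exact h5.symm
  exact ⟨⟨hne, hee, hcen, hprim⟩,
    (fun y => by obtain ⟨x, hx⟩ := hsur y; exact ⟨x, hx⟩), hann⟩

end MasterGen

section Part3

variable {G : Type*} [Group G] [Fintype G]

theorem part3gen (F E : Type*) [Field F] [Field E] [Algebra F E]
    [FiniteDimensional F E] [IsGalois F E]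
    (hnF : ((Fintype.card G : ℕ) : F) ≠ 0)
    (χE ψE : G →* E)
    (hinjχ : Function.Injective fun σ : E ≃ₐ[F] E => conjChar σ χE)
    (hinjψ : Function.Injective fun σ : E ≃ₐ[F] E => conjChar σ ψE) :
    ((Fintype.card G : F)⁻¹ • ∑ g : G, MonoidAlgebra.single g⁻¹ (Algebra.trace F E (χE g))) =
    ((Fintype.card G : F)⁻¹ • ∑ g : G, MonoidAlgebra.single g⁻¹ (Algebra.trace F E (ψE g))) ↔
    ∃ σ : E ≃ₐ[F] E, ψE = conjChar σ χE := by
  classical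
  constructor
  · intro heq
    have key : ∀ (c : G → F) (h : G),
        ∑ g : G, (MonoidAlgebra.single g⁻¹ (c g) : MonoidAlgebra F G).coeff h⁻¹ = c h := by
      intro c h
      rw [Finset.sum_eq_single h]
      · simp [Finsupp.single_apply]
      · intro g _ hg
        rw [MonoidAlgebra.coeff_single, Finsupp.single_apply, if_neg (fun hc => hg (inv_injective hc))]
      · simp
    have hcoef : ∀ h : G, Algebra.trace F E (χE h) = Algebra.trace F E (ψE h) := by
      intro h
      have hS := smul_right_injective (MonoidAlgebra F G) (inv_ne_zero hnF) heq
      have h1 := Finsupp.ext_iff.mp (congrArg MonoidAlgebra.coeff hS) h⁻¹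
      rw [MonoidAlgebra.coeff_sum, MonoidAlgebra.coeff_sum, Finsupp.finset_sum_apply, Finsupp.finset_sum_apply, key, key] at h1
      exact h1
    have htr : ∀ h : G, ∑ σ : E ≃ₐ[F] E, σ (χE h) = ∑ σ : E ≃ₐ[F] E, σ (ψE h) := by
      intro h
      have h2 := congrArg (algebraMap F E) (hcoef h)
      rwa [trace_eq_sum_automorphisms, trace_eq_sum_automorphisms] at h2
    set A := Finset.image (fun σ : E ≃ₐ[F] E => conjChar σ χE) Finset.univ with hA
    set B := Finset.image (fun σ : E ≃ₐ[F] E => conjChar σ ψE) Finset.univ with hB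
    have hsumA : ∀ h : G, ∑ η ∈ A, η h = ∑ σ : E ≃ₐ[F] E, σ (χE h) := by
      intro h
      rw [hA, Finset.sum_image (fun σ _ τ _ hc => hinjχ hc)]
      rfl
    have hsumB : ∀ h : G, ∑ η ∈ B, η h = ∑ σ : E ≃ₐ[F] E, σ (ψE h) := by
      intro h
      rw [hB, Finset.sum_image]
      · rfl
      · intro σ _ τ _ hc
        exact hinjψ hc
    have hψB : ψE ∈ B := by
      rw [hB]
      refine Finset.mem_image.mpr ⟨1, Finset.mem_univ _, ?_⟩
      ext g
      simp
    have hψA : ψE ∈ A := by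
      by_contra hna
      have li := linearIndependent_monoidHom G E
      have e1 : ∑ η ∈ A ∪ B, (if η ∈ A then (1 : E) else 0) • (η : G → E) =
          ∑ η ∈ A, (η : G → E) := by
        simp only [ite_smul, one_smul, zero_smul]
        rw [Finset.sum_ite_mem, Finset.union_inter_cancel_left]
      have e2 : ∑ η ∈ A ∪ B, (if η ∈ B then (1 : E) else 0) • (η : G → E) =
          ∑ η ∈ B, (η : G → E) := by
        simp only [ite_smul, one_smul, zero_smul]
        rw [Finset.sum_ite_mem, Finset.union_inter_cancel_right]
      have hfun : ∑ η ∈ A, (η : G → E) = ∑ η ∈ B, (η : G → E) := by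
        funext x
        rw [Finset.sum_apply, Finset.sum_apply, hsumA x, hsumB x]
        exact htr x
      have hrel : ∑ η ∈ A ∪ B,
          (((if η ∈ A then (1 : E) else 0) - (if η ∈ B then 1 else 0)) • (η : G → E)) = 0 := by
        simp only [sub_smul]
        rw [Finset.sum_sub_distrib, e1, e2, hfun, sub_self]
      have h6 := linearIndependent_iff'.mp li (A ∪ B) _ hrel ψE (Finset.mem_union_right _ hψB)
      rw [if_neg hna, if_pos hψB] at h6
      simp at h6
    obtain ⟨σ, -, hσ⟩ := Finset.mem_image.mp (by rw [hA] at hψA; exact hψA)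
    exact ⟨σ, hσ.symm⟩
  · rintro ⟨σ, rfl⟩
    congr 1
    refine Finset.sum_congr rfl fun g _ => ?_
    congr 1
    rw [conjChar_apply]
    exact (trace_aut σ (χE g)).symm

end Part3

/-- let `G` be a finite group, `N ⊴ G` with `G/N` cyclic of order `k` and `F`
a number field.  A Galois orbit `C` of faithful characters of `G/N` is represented by a
character `χ` of `G` with kernel `N` and values in `F(ζ_k)`; then
`ε_C(G,N) = (1/|G|) ∑_g Tr_{F(ζ_k)/F}(χ(gN)) g⁻¹` is a primitive central idempotent of `FG`
with `FG·ε_C(G,N) ≅ F(ζ_k)` (expressed by a surjective `F`-algebra map `FG → F(ζ_k)` whose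
vanishing locus is the annihilator of `ε_C(G,N)`), and two orbits give the same idempotent
iff they coincide (i.e. the characters are Galois conjugate). -/
theorem stmt5 (G : Type*) [Group G] [Fintype G]
    (F : IntermediateField ℚ ℂ) [FiniteDimensional ℚ F]
    (N : Subgroup G) [N.Normal] (k : ℕ) (hk : Nat.card (G ⧸ N) = k)
    (hcyc : IsCyclic (G ⧸ N)) (ζ : ℂ) (hζ : IsPrimitiveRoot ζ k)
    (χ ψ : G →* ℂ)
    (hkerχ : ∀ g : G, χ g = 1 ↔ g ∈ N) (hkerψ : ∀ g : G, ψ g = 1 ↔ g ∈ N)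
    (hmemχ : ∀ g : G, χ g ∈ IntermediateField.adjoin F {ζ})
    (hmemψ : ∀ g : G, ψ g ∈ IntermediateField.adjoin F {ζ}) :
    IsPrimitiveCentralIdempotent
      ((Fintype.card G : F)⁻¹ • ∑ g : G, MonoidAlgebra.single g⁻¹
        (Algebra.trace F (IntermediateField.adjoin F {ζ}) ⟨χ g, hmemχ g⟩)) ∧
    (∃ f : MonoidAlgebra F G →ₐ[F] (IntermediateField.adjoin F {ζ}),
      Function.Surjective f ∧
      ∀ x : MonoidAlgebra F G, f x = 0 ↔
        x * ((Fintype.card G : F)⁻¹ • ∑ g : G, MonoidAlgebra.single g⁻¹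
          (Algebra.trace F (IntermediateField.adjoin F {ζ}) ⟨χ g, hmemχ g⟩)) = 0) ∧
    (((Fintype.card G : F)⁻¹ • ∑ g : G, MonoidAlgebra.single g⁻¹
        (Algebra.trace F (IntermediateField.adjoin F {ζ}) ⟨χ g, hmemχ g⟩)) =
     ((Fintype.card G : F)⁻¹ • ∑ g : G, MonoidAlgebra.single g⁻¹
        (Algebra.trace F (IntermediateField.adjoin F {ζ}) ⟨ψ g, hmemψ g⟩)) ↔
      ∃ σ : IntermediateField.adjoin F {ζ} ≃ₐ[F] IntermediateField.adjoin F {ζ},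
        ∀ g : G, ψ g = σ ⟨χ g, hmemχ g⟩) := by
  classical
  have hk0 : k ≠ 0 := by rw [← hk]; exact Nat.card_pos.ne'
  haveI := fdE F hk0 hζ
  haveI := galE F hk0 hζ
  have hnF : ((Fintype.card G : ℕ) : F) ≠ 0 := Nat.cast_ne_zero.mpr Fintype.card_ne_zero
  have hnE : ((Fintype.card G : ℕ) : adjoin F {ζ}) ≠ 0 :=
    Nat.cast_ne_zero.mpr Fintype.card_ne_zero
  obtain ⟨gχ, hgχ⟩ := exists_primroot N hk hcyc χ hkerχ
  obtain ⟨gψ, hgψ⟩ := exists_primroot N hk hcyc ψ hkerψ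
  have hinjχ := conj_inj F hk0 hζ χ hmemχ gχ hgχ
  have hinjψ := conj_inj F hk0 hζ ψ hmemψ gψ hgψ
  have hsur : ∀ y : adjoin F {ζ},
      y ∈ ((MonoidAlgebra.lift F (adjoin F {ζ}) G) (charToSub (adjoin F {ζ}) χ hmemχ)).range := by
    haveI : NeZero k := ⟨hk0⟩
    obtain ⟨i, -, hi⟩ := hgχ.eq_pow_of_pow_eq_one hζ.pow_eq_one
    have hζE : (⟨ζ, subset_adjoin F {ζ} rfl⟩ : adjoin F {ζ}) ∈
        ((MonoidAlgebra.lift F (adjoin F {ζ}) G) (charToSub (adjoin F {ζ}) χ hmemχ)).range := by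
      refine ⟨MonoidAlgebra.single (gχ ^ i) 1, ?_⟩
      show ((MonoidAlgebra.lift F (adjoin F {ζ}) G) (charToSub (adjoin F {ζ}) χ hmemχ))
        (MonoidAlgebra.single (gχ ^ i) 1) = _
      rw [MonoidAlgebra.lift_single, one_smul, map_pow]
      apply Subtype.ext
      push_cast
      exact hi
    have h5 : Algebra.adjoin F {(⟨ζ, subset_adjoin F {ζ} rfl⟩ : adjoin F {ζ})} ≤
        ((MonoidAlgebra.lift F (adjoin F {ζ}) G) (charToSub (adjoin F {ζ}) χ hmemχ)).range :=
      Algebra.adjoin_le (Set.singleton_subset_iff.mpr hζE)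
    rw [adjoin_top F hk0 hζ] at h5
    intro y
    exact h5 (Algebra.mem_top (R := F) (A := adjoin F {ζ}) (x := y))
  obtain ⟨h1, h2, h3⟩ :=
    masterGen F (adjoin F {ζ}) hnF hnE (charToSub (adjoin F {ζ}) χ hmemχ) hinjχ hsur
  have hp3 := part3gen F (adjoin F {ζ}) hnF (charToSub (adjoin F {ζ}) χ hmemχ)
    (charToSub (adjoin F {ζ}) ψ hmemψ) hinjχ hinjψ
  refine ⟨h1, ⟨_, h2, h3⟩, ?_⟩
  constructor
  · intro heq
    obtain ⟨σ, hσ⟩ := hp3.mp heq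
    exact ⟨σ, fun g => congrArg Subtype.val (DFunLike.congr_fun hσ g)⟩
  · rintro ⟨σ, hσ⟩
    apply hp3.mpr
    exact ⟨σ, MonoidHom.ext fun g => Subtype.ext (hσ g)⟩
end

section
/- Let K ⊴ H ≤ G with H/K cyclic of order k, F a number field, and C a Galois orbit of faithful characters of H/K. For g ∈ H (or more generally g ∈ G), the following are equivalent: (a) g ∈ K; (b) g·ε_C(H,K) = ε_C(H,K); (c) ĝ·ε_C(H,K) = ε_C(H,K), where ĝ = (1/|⟨g⟩|) Σ_{x∈⟨g⟩} x. -/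
set_option synthInstance.maxHeartbeats 1000000
set_option maxHeartbeats 1000000

open IntermediateField
open scoped Classical

open Module in
lemma auxA (F : IntermediateField ℚ ℂ) (E : IntermediateField F ℂ)
    [FiniteDimensional F E] (α : E) (m : ℕ) (hm : 0 < m) (hα : α ^ m = 1) :
    ((algebraMap F ℂ (Algebra.trace F E α)).re ≤ (finrank F E : ℝ)) ∧
    ((algebraMap F ℂ (Algebra.trace F E α)).re = (finrank F E : ℝ) → α = 1) := by
  have hsep : Algebra.IsSeparable F E := Algebra.IsSeparable.of_integral F E
  rw [trace_eq_sum_embeddings ℂ, Complex.re_sum]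
  have habs : ∀ σ : E →ₐ[F] ℂ, ‖σ α‖ = 1 := by
    intro σ
    have h1 : (σ α) ^ m = 1 := by rw [← map_pow]; rw [hα, map_one]
    exact Complex.norm_eq_one_of_pow_eq_one h1 hm.ne'
  have hre : ∀ σ : E →ₐ[F] ℂ, (σ α).re ≤ 1 := fun σ =>
    (Complex.re_le_norm _).trans (le_of_eq (habs σ))
  have hconst : ∑ _σ : E →ₐ[F] ℂ, (1:ℝ) = (finrank F E : ℝ) := by
    rw [Finset.sum_const, Finset.card_univ, AlgHom.card F E ℂ, nsmul_eq_mul, mul_one]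
  constructor
  · calc ∑ σ : E →ₐ[F] ℂ, (σ α).re ≤ ∑ _σ : E →ₐ[F] ℂ, (1:ℝ) :=
          Finset.sum_le_sum fun σ _ => hre σ
      _ = (finrank F E : ℝ) := hconst
  · intro heq
    have hall : ∀ σ : E →ₐ[F] ℂ, (σ α).re = 1 := by
      by_contra hc
      push_neg at hc
      obtain ⟨σ₀, hσ₀⟩ := hc
      have hlt : ∑ σ : E →ₐ[F] ℂ, (σ α).re < ∑ _σ : E →ₐ[F] ℂ, (1:ℝ) :=
        Finset.sum_lt_sum (fun σ _ => hre σ) ⟨σ₀, Finset.mem_univ _, lt_of_le_of_ne (hre σ₀) hσ₀⟩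
      rw [heq, hconst] at hlt
      exact absurd hlt (lt_irrefl _)
    have hone : ∀ σ : E →ₐ[F] ℂ, σ α = 1 := by
      intro σ
      have h1 := habs σ
      have h2 := hall σ
      have h3 : (1:ℝ)^2 = (σ α).re^2 + (σ α).im^2 := by
        rw [← h1, Complex.sq_norm, Complex.normSq_apply]; ring
      have him : (σ α).im = 0 := by nlinarith
      exact Complex.ext (by simp [h2]) (by simp [him])
    have := hone (IntermediateField.val E)
    exact Subtype.ext (by simpa using this)

/-- let `K ⊴ H ≤ G` with `H/K` cyclic of order `k`, `F` a number field and
`C` a Galois orbit of faithful characters of `H/K`, represented by a character `χ` of `H`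
with kernel `K` and values in `F(ζ_k)`.  With
`ε_C(H,K) = (1/|H|) ∑_{h∈H} Tr_{F(ζ_k)/F}(χ(hK)) h⁻¹ ∈ FH ⊆ FG`, the following are
equivalent for `g ∈ G`: (a) `g ∈ K`; (b) `g·ε_C(H,K) = ε_C(H,K)`;
(c) `ĝ·ε_C(H,K) = ε_C(H,K)` where `ĝ = (1/|⟨g⟩|) ∑_{x∈⟨g⟩} x`. -/
theorem stmt6 (G : Type*) [Group G] [Fintype G]
    (F : IntermediateField ℚ ℂ) [FiniteDimensional ℚ F]
    (H K : Subgroup G) (hKH : K ≤ H)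
    (hnorm : ∀ h ∈ H, ∀ x ∈ K, h * x * h⁻¹ ∈ K)
    (k : ℕ) (hk : Nat.card K * k = Nat.card H)
    (hcyc : ∃ c ∈ H, ∀ x ∈ H, ∃ i : ℕ, (c ^ i)⁻¹ * x ∈ K)
    (ζ : ℂ) (hζ : IsPrimitiveRoot ζ k)
    (χ : H →* ℂ) (hker : ∀ x : H, χ x = 1 ↔ (x : G) ∈ K)
    (hmem : ∀ x : H, χ x ∈ IntermediateField.adjoin F {ζ})
    (g : G) :
    ((g ∈ K) ↔
      MonoidAlgebra.single g (1 : F) *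
        ((Nat.card H : F)⁻¹ • ∑ x : H, MonoidAlgebra.single ((x : G))⁻¹
          (Algebra.trace F (IntermediateField.adjoin F {ζ}) ⟨χ x, hmem x⟩)) =
      ((Nat.card H : F)⁻¹ • ∑ x : H, MonoidAlgebra.single ((x : G))⁻¹
          (Algebra.trace F (IntermediateField.adjoin F {ζ}) ⟨χ x, hmem x⟩))) ∧
    ((g ∈ K) ↔
      ((orderOf g : F)⁻¹ • ∑ i ∈ Finset.range (orderOf g),
          MonoidAlgebra.single (g ^ i) (1 : F)) *
        ((Nat.card H : F)⁻¹ • ∑ x : H, MonoidAlgebra.single ((x : G))⁻¹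
          (Algebra.trace F (IntermediateField.adjoin F {ζ}) ⟨χ x, hmem x⟩)) =
      ((Nat.card H : F)⁻¹ • ∑ x : H, MonoidAlgebra.single ((x : G))⁻¹
          (Algebra.trace F (IntermediateField.adjoin F {ζ}) ⟨χ x, hmem x⟩))) := by
  have hH0 : 0 < Nat.card H := Nat.card_pos
  have hk0 : 0 < k := by
    rcases Nat.eq_zero_or_pos k with h | h
    · rw [h, mul_zero] at hk; omega
    · exact h
  have hζint : IsIntegral F ζ := ⟨Polynomial.X ^ k - Polynomial.C 1,
    Polynomial.monic_X_pow_sub_C 1 hk0.ne', by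
      simp [hζ.pow_eq_one]⟩
  haveI : FiniteDimensional F (IntermediateField.adjoin F {ζ}) :=
    IntermediateField.adjoin.finiteDimensional hζint
  set E := IntermediateField.adjoin F {ζ} with hEdef
  set ε : MonoidAlgebra F G := (Nat.card H : F)⁻¹ • ∑ x : H, MonoidAlgebra.single ((x : G))⁻¹
      (Algebra.trace F E ⟨χ x, hmem x⟩) with hεd
  have hε : ∀ y : G, ε.coeff y = (Nat.card H : F)⁻¹ *
      (if hy : y⁻¹ ∈ H then Algebra.trace F E ⟨χ ⟨y⁻¹, hy⟩, hmem _⟩ else 0) := by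
    intro y
    rw [hεd, MonoidAlgebra.coeff_smul_apply, smul_eq_mul]
    congr 1
    rw [MonoidAlgebra.coeff_sum, Finsupp.finset_sum_apply]
    by_cases hy : y⁻¹ ∈ H
    · rw [dif_pos hy]
      have hiff : ∀ x : H, ((x:G))⁻¹ = y ↔ x = ⟨y⁻¹, hy⟩ := by
        intro x
        constructor
        · intro h; subst h; exact Subtype.ext (inv_inv _).symm
        · intro h; rw [h, inv_inv]
      calc ∑ x : H, (MonoidAlgebra.single ((x:G))⁻¹ (Algebra.trace F E ⟨χ x, hmem x⟩) : MonoidAlgebra F G).coeff y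
          = ∑ x : H, if x = ⟨y⁻¹, hy⟩ then Algebra.trace F E ⟨χ x, hmem x⟩ else 0 := by
            refine Finset.sum_congr rfl fun x _ => ?_
            rw [MonoidAlgebra.coeff_single, Finsupp.single_apply]
            exact if_congr (hiff x) rfl rfl
        _ = _ := by rw [Finset.sum_ite_eq' Finset.univ, if_pos (Finset.mem_univ _)]
    · rw [dif_neg hy]
      refine Finset.sum_eq_zero fun x _ => ?_
      rw [MonoidAlgebra.coeff_single, Finsupp.single_apply, if_neg]
      intro h
      exact hy (by rw [← h, inv_inv]; exact x.2)
  have hNne : (Nat.card H : F) ≠ 0 := Nat.cast_ne_zero.mpr hH0.ne'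
  have hdpos : 0 < Module.finrank F E := Module.finrank_pos
  have htr1 : Algebra.trace F E 1 = (Module.finrank F E : F) := by
    have h := Algebra.trace_algebraMap (R := F) (S := E) 1
    rw [map_one] at h
    rw [h, nsmul_eq_mul, mul_one]
  have hroot : ∀ x : H, (⟨χ x, hmem x⟩ : E) ^ (Fintype.card H) = 1 := by
    intro x
    have hc : χ x ^ (Fintype.card H) = 1 := by rw [← map_pow, pow_card_eq_one, map_one]
    apply Subtype.ext
    rw [SubmonoidClass.coe_pow]
    simpa using hc
  -- the coefficient function and its properties
  set t : G → F := fun y =>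
    if hy : y⁻¹ ∈ H then Algebra.trace F E ⟨χ ⟨y⁻¹, hy⟩, hmem _⟩ else 0 with htdef
  have ht1 : ∀ y : G, ε.coeff y = (Nat.card H : F)⁻¹ * t y := hε
  have ht2 : ∀ y : G, (Complex.re (algebraMap F ℂ (t y))) ≤ (Module.finrank F E : ℝ) := by
    intro y
    rw [htdef]
    by_cases hy : y⁻¹ ∈ H
    · simp only [dif_pos hy]
      exact (auxA F E _ (Fintype.card H) Fintype.card_pos (hroot _)).1
    · simp only [dif_neg hy, map_zero, Complex.zero_re]
      positivity
  have ht3 : ∀ y : G, (y⁻¹ ∈ K) ↔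
      (Complex.re (algebraMap F ℂ (t y))) = (Module.finrank F E : ℝ) := by
    intro y
    rw [htdef]
    by_cases hy : y⁻¹ ∈ H
    · simp only [dif_pos hy]
      constructor
      · intro hyK
        have hχ : χ ⟨y⁻¹, hy⟩ = 1 := (hker _).mpr hyK
        have e2 : (⟨χ ⟨y⁻¹, hy⟩, hmem _⟩ : E) = 1 := by
          apply Subtype.ext
          show χ ⟨y⁻¹, hy⟩ = _
          rw [hχ]; rfl
        rw [e2, htr1, map_natCast]
        simp
      · intro hre
        have hα := (auxA F E _ (Fintype.card H) Fintype.card_pos (hroot _)).2 hre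
        exact (hker _).mp (by simpa using congrArg Subtype.val hα)
    · simp only [dif_neg hy, map_zero, Complex.zero_re]
      constructor
      · intro hyK; exact absurd (hKH hyK) hy
      · intro h
        have : (Module.finrank F E : ℝ) ≠ 0 := Nat.cast_ne_zero.mpr hdpos.ne'
        exact absurd h.symm this
  have ht4 : (Complex.re (algebraMap F ℂ (t 1))) = (Module.finrank F E : ℝ) :=
    (ht3 1).mp (by rw [inv_one]; exact K.one_mem)
  -- shift invariance
  have hshift : ∀ a : G, a ∈ K → ∀ y : G, ε.coeff (a⁻¹ * y) = ε.coeff y := by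
    intro a ha y
    have haH : a ∈ H := hKH ha
    rw [ht1, ht1, htdef]
    congr 1
    by_cases hy : y⁻¹ ∈ H
    · have hy2 : (a⁻¹ * y)⁻¹ ∈ H := by
        rw [mul_inv_rev, inv_inv]; exact H.mul_mem hy haH
      simp only [dif_pos hy2, dif_pos hy]
      have e3 : (⟨(a⁻¹ * y)⁻¹, hy2⟩ : H) = ⟨y⁻¹, hy⟩ * ⟨a, haH⟩ := by
        apply Subtype.ext
        simp [mul_inv_rev]
      rw [e3]
      congr 1
      apply Subtype.ext
      show χ _ = χ _
      rw [map_mul, (hker ⟨a, haH⟩).mpr ha, mul_one]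
    · have hy2 : ¬ (a⁻¹ * y)⁻¹ ∈ H := by
        intro h
        apply hy
        have e4 : y⁻¹ = (a⁻¹ * y)⁻¹ * a⁻¹ := by group
        rw [e4]; exact H.mul_mem h (H.inv_mem haH)
      simp only [dif_neg hy, dif_neg hy2]
  have hb : ∀ a : G, a ∈ K → MonoidAlgebra.single a (1 : F) * ε = ε := by
    intro a ha
    refine MonoidAlgebra.ext (Finsupp.ext fun y => ?_)
    rw [MonoidAlgebra.single_mul_apply, one_mul, hshift a ha y]
  constructor
  · constructor
    · intro hg; exact hb g hg
    · intro heq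
      have h1 : (MonoidAlgebra.single g (1:F) * ε).coeff g = ε.coeff g := by rw [heq]
      rw [MonoidAlgebra.single_mul_apply, one_mul, inv_mul_cancel] at h1
      rw [ht1, ht1] at h1
      have h2 := mul_left_cancel₀ (inv_ne_zero hNne) h1
      have h3 : (Complex.re (algebraMap F ℂ (t g))) = (Module.finrank F E : ℝ) := by
        rw [← h2]; exact ht4
      have hKmem := (ht3 g).mpr h3
      simpa using K.inv_mem hKmem
  · constructor
    · intro hg
      have hn0 : (orderOf g : F) ≠ 0 := Nat.cast_ne_zero.mpr (orderOf_pos g).ne'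
      rw [smul_mul_assoc, Finset.sum_mul]
      have he : ∀ i ∈ Finset.range (orderOf g), MonoidAlgebra.single (g ^ i) (1:F) * ε = ε :=
        fun i _ => hb _ (K.pow_mem hg i)
      rw [Finset.sum_congr rfl he, Finset.sum_const, Finset.card_range,
        ← Nat.cast_smul_eq_nsmul F, smul_smul, inv_mul_cancel₀ hn0, one_smul]
    · intro heq
      by_contra hgK
      have hg1 : g ≠ 1 := fun h => hgK (h ▸ K.one_mem)
      have hn1 : 1 < orderOf g := by
        have h0 : orderOf g ≠ 0 := (orderOf_pos g).ne'
        have h1 : orderOf g ≠ 1 := fun h => hg1 (orderOf_eq_one_iff.mp h)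
        omega
      have hnne : (orderOf g : F) ≠ 0 := Nat.cast_ne_zero.mpr (by omega)
      rw [smul_mul_assoc, Finset.sum_mul] at heq
      have h1 : (((orderOf g : F))⁻¹ • ∑ i ∈ Finset.range (orderOf g),
          MonoidAlgebra.single (g ^ i) (1:F) * ε).coeff (1:G) = ε.coeff (1:G) := by rw [heq]
      rw [MonoidAlgebra.coeff_smul_apply, MonoidAlgebra.coeff_sum, Finsupp.finset_sum_apply] at h1
      simp only [MonoidAlgebra.single_mul_apply, one_mul, mul_one] at h1
      rw [smul_eq_mul] at h1
      have h2 : ∑ i ∈ Finset.range (orderOf g), ε.coeff ((g ^ i)⁻¹)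
          = (orderOf g : F) * ε.coeff 1 := by
        rw [← h1, ← mul_assoc, mul_inv_cancel₀ hnne, one_mul]
      have h3 : ∑ i ∈ Finset.range (orderOf g), t ((g ^ i)⁻¹)
          = (orderOf g : F) * t 1 := by
        have h2' := h2
        simp only [ht1] at h2'
        rw [← Finset.mul_sum, ← mul_assoc, mul_comm ((orderOf g : F)) _, mul_assoc] at h2'
        exact mul_left_cancel₀ (inv_ne_zero hNne) h2'
      have h4 := congrArg (fun x : F => (Complex.re (algebraMap F ℂ x))) h3
      simp only [map_sum, Complex.re_sum, map_mul, map_natCast, Complex.mul_re,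
        Complex.natCast_re, Complex.natCast_im, zero_mul, sub_zero] at h4
      rw [ht4] at h4
      have hlt : ∑ i ∈ Finset.range (orderOf g), Complex.re (algebraMap F ℂ (t ((g ^ i)⁻¹)))
          < ∑ _i ∈ Finset.range (orderOf g), (Module.finrank F E : ℝ) := by
        refine Finset.sum_lt_sum (fun i _ => ht2 _) ⟨1, Finset.mem_range.mpr hn1, ?_⟩
        refine lt_of_le_of_ne (ht2 _) fun hcon => ?_
        have hmem1 := (ht3 ((g ^ 1)⁻¹)).mpr hcon
        rw [inv_inv, pow_one] at hmem1
        exact hgK hmem1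
      rw [Finset.sum_const, Finset.card_range, nsmul_eq_mul] at hlt
      rw [h4] at hlt
      exact absurd hlt (lt_irrefl _)
end

section
/- Let K ⊴ H ≤ G with H/K cyclic, H normal in N_G(K), and F a number field. Then the centralizer in G of ε_C(H,K) equals E_F(G,H/K), the stabilizer in N_G(H) ∩ N_G(K) of any orbit C of faithful characters of H/K under Gal(F(ζ_{[H:K]})/F), with respect to the conjugation action on such orbits. -/
set_option synthInstance.maxHeartbeats 1000000
set_option maxHeartbeats 1000000

open IntermediateField
open scoped Classical

lemma aux_sum_eq_card {ι : Type*} (s : Finset ι) (f : ι → ℂ)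
    (habs : ∀ i ∈ s, ‖f i‖ = 1) (hsum : ∑ i ∈ s, f i = (s.card : ℂ)) :
    ∀ i ∈ s, f i = 1 := by
  have hre : ∀ i ∈ s, (f i).re ≤ 1 := fun i hi => (Complex.re_le_norm (f i)).trans (habs i hi).le
  have hsre : ∑ i ∈ s, (f i).re = ∑ i ∈ s, (1 : ℝ) := by
    have := congrArg Complex.re hsum
    simpa [Complex.re_sum] using this
  have heq : ∀ i ∈ s, (f i).re = 1 := by
    intro i hi
    have := (Finset.sum_eq_sum_iff_of_le hre).mp hsre i hi
    simpa using this
  intro i hi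
  have h1 : (f i).re = 1 := heq i hi
  have h2 : ‖f i‖ = 1 := habs i hi
  have him : (f i).im = 0 := by
    have := Complex.sq_norm (f i)
    rw [h2] at this
    simp [Complex.normSq_apply, h1] at this
    nlinarith [this]
  exact Complex.ext (by simp [h1]) (by simp [him])

lemma aux_exists_eq_of_sum_pow_eq {ι : Type*} [Fintype ι] {k : ℕ} (hk : k ≠ 0) {ζ : ℂ}
    (hζ : IsPrimitiveRoot ζ k) (u v : ι → ℂ) (hu : ∀ σ, u σ ^ k = 1) (hv : ∀ σ, v σ ^ k = 1)
    (hsum : ∀ i : ℕ, ∑ σ, u σ ^ i = ∑ σ, v σ ^ i) (σ₀ : ι) : ∃ τ, u τ = v σ₀ := by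
  have : NeZero k := ⟨hk⟩
  have ha : ∀ σ, ∃ a, a < k ∧ ζ ^ a = u σ := fun σ => by
    obtain ⟨a, h1, h2⟩ := hζ.eq_pow_of_pow_eq_one (hu σ)
    exact ⟨a, h1, h2⟩
  have hb : ∀ σ, ∃ b, b < k ∧ ζ ^ b = v σ := fun σ => by
    obtain ⟨b, h1, h2⟩ := hζ.eq_pow_of_pow_eq_one (hv σ)
    exact ⟨b, h1, h2⟩
  choose a hak hau using ha
  choose b hbk hbv using hb
  set P : Polynomial ℂ :=
    (∑ σ, Polynomial.X ^ (a σ)) - (∑ σ, Polynomial.X ^ (b σ)) with hP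
  have heval : ∀ j : Fin k, P.eval (ζ ^ (j : ℕ)) = 0 := by
    intro j
    have : ∀ (c : ι → ℕ) (w : ι → ℂ), (∀ σ, ζ ^ c σ = w σ) →
        Polynomial.eval (ζ ^ (j:ℕ)) (∑ σ, Polynomial.X ^ (c σ)) = ∑ σ, w σ ^ (j:ℕ) := by
      intro c w hw
      rw [Polynomial.eval_finset_sum]
      refine Finset.sum_congr rfl fun σ _ => ?_
      rw [Polynomial.eval_pow, Polynomial.eval_X, ← hw σ, ← pow_mul, ← pow_mul, mul_comm]
    simp only [hP, Polynomial.eval_sub, this a u hau, this b v hbv, hsum (j:ℕ), sub_self]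
  have hdeg : P.natDegree < k := by
    have h1 : (∑ σ, (Polynomial.X : Polynomial ℂ) ^ (a σ)).natDegree ≤ k - 1 :=
      Polynomial.natDegree_sum_le_of_forall_le _ _ fun σ _ => by
        simpa using Nat.le_pred_of_lt (hak σ)
    have h2 : (∑ σ, (Polynomial.X : Polynomial ℂ) ^ (b σ)).natDegree ≤ k - 1 :=
      Polynomial.natDegree_sum_le_of_forall_le _ _ fun σ _ => by
        simpa using Nat.le_pred_of_lt (hbk σ)
    have := (Polynomial.natDegree_sub_le _ _).trans (max_le h1 h2)
    rw [hP]
    omega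
  have hinj : Function.Injective (fun j : Fin k => ζ ^ (j : ℕ)) := by
    intro i j hij
    exact Fin.ext (hζ.pow_inj i.2 j.2 hij)
  have hP0 : P = 0 := by
    refine Polynomial.eq_zero_of_natDegree_lt_card_of_eval_eq_zero P hinj heval ?_
    simpa using hdeg
  have hcoeff : ∀ c : ℕ,
      ((Finset.univ.filter fun σ => c = a σ).card : ℂ) =
      ((Finset.univ.filter fun σ => c = b σ).card : ℂ) := by
    intro c
    have := congrArg (fun p => Polynomial.coeff p c) hP0
    simp only [hP, Polynomial.coeff_sub, Polynomial.coeff_zero,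
      Polynomial.finset_sum_coeff, Polynomial.coeff_X_pow] at this
    rw [sub_eq_zero] at this
    simpa [Finset.sum_ite_eq, Finset.sum_boole] using this
  have hcard := hcoeff (b σ₀)
  rw [Nat.cast_inj] at hcard
  have hne : (Finset.univ.filter fun σ => b σ₀ = a σ).Nonempty := by
    rw [← Finset.card_pos, hcard, Finset.card_pos]
    exact ⟨σ₀, by simp⟩
  obtain ⟨τ, hτ⟩ := hne
  simp only [Finset.mem_filter] at hτ
  exact ⟨τ, by rw [← hau τ, ← hτ.2, hbv σ₀]⟩

lemma aux_trace_eq_iff (F : IntermediateField ℚ ℂ) (L : IntermediateField F ℂ)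
    [FiniteDimensional F L] [IsGalois F L] (x : L) (N : ℕ) (hN : N ≠ 0) (hx : x ^ N = 1) :
    Algebra.trace F L x = (Module.finrank F L : F) ↔ x = 1 := by
  constructor
  · intro h
    have h2 : ∑ σ : L ≃ₐ[F] L, σ x = algebraMap F L (Module.finrank F L : F) := by
      rw [← trace_eq_sum_automorphisms, h]
    have h3 : ∑ σ : L ≃ₐ[F] L, ((σ x : L) : ℂ) = ((Finset.univ : Finset (L ≃ₐ[F] L)).card : ℂ) := by
      have := congrArg (fun z : L => (z : ℂ)) h2
      push_cast at this
      rw [this]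
      simp [IsGalois.card_aut_eq_finrank F L]
      rw [← Nat.card_eq_fintype_card, IsGalois.card_aut_eq_finrank]
    have habs : ∀ σ : L ≃ₐ[F] L, σ ∈ Finset.univ → ‖((σ x : L) : ℂ)‖ = 1 := by
      intro σ _
      refine Complex.norm_eq_one_of_pow_eq_one ?_ hN
      have : (σ x) ^ N = 1 := by rw [← map_pow, hx, map_one]
      have := congrArg (fun z : L => (z : ℂ)) this
      push_cast at this
      exact_mod_cast this
    have := aux_sum_eq_card Finset.univ _ habs h3 1 (Finset.mem_univ _)
    simp only [AlgEquiv.one_apply] at this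
    exact Subtype.coe_injective (by simpa using this)
  · rintro rfl
    have := Algebra.trace_algebraMap (R := F) (S := L) (1 : F)
    rw [map_one] at this
    rw [this]
    simp

lemma aux_galois (F : IntermediateField ℚ ℂ) (L : IntermediateField F ℂ)
    [FiniteDimensional F L] [IsGalois F L] {k : ℕ} (hk : k ≠ 0) {ζ : ℂ}
    (hζ : IsPrimitiveRoot ζ k) (z w : L) (hz : z ^ k = 1) (hw : w ^ k = 1)
    (htr : ∀ i : ℕ, Algebra.trace F L (w ^ i) = Algebra.trace F L (z ^ i)) :
    ∃ τ : L ≃ₐ[F] L, τ z = w := by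
  have hsum : ∀ i : ℕ,
      ∑ σ : L ≃ₐ[F] L, ((σ z : L) : ℂ) ^ i = ∑ σ : L ≃ₐ[F] L, ((σ w : L) : ℂ) ^ i := by
    intro i
    have h2 := congrArg (algebraMap F L) (htr i)
    rw [trace_eq_sum_automorphisms, trace_eq_sum_automorphisms] at h2
    have h3 := congrArg (fun a : L => (a : ℂ)) h2
    push_cast at h3
    have h4 : ∀ (aL : L), (fun σ : L ≃ₐ[F] L => ((σ (aL ^ i) : L) : ℂ)) =
        (fun σ : L ≃ₐ[F] L => ((σ aL : L) : ℂ) ^ i) := by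
      intro aL
      funext σ
      rw [map_pow]
      push_cast
      ring
    calc ∑ σ : L ≃ₐ[F] L, ((σ z : L) : ℂ) ^ i
        = ∑ σ : L ≃ₐ[F] L, ((σ (z ^ i) : L) : ℂ) := by rw [h4 z]
      _ = ∑ σ : L ≃ₐ[F] L, ((σ (w ^ i) : L) : ℂ) := h3.symm
      _ = ∑ σ : L ≃ₐ[F] L, ((σ w : L) : ℂ) ^ i := by rw [h4 w]
  have hupow : ∀ σ : L ≃ₐ[F] L, ((σ z : L) : ℂ) ^ k = 1 := by
    intro σ
    have h5 : (σ z) ^ k = 1 := by rw [← map_pow, hz, map_one]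
    have h6 := congrArg (fun a : L => (a : ℂ)) h5
    push_cast at h6
    exact_mod_cast h6
  have hvpow : ∀ σ : L ≃ₐ[F] L, ((σ w : L) : ℂ) ^ k = 1 := by
    intro σ
    have h5 : (σ w) ^ k = 1 := by rw [← map_pow, hw, map_one]
    have h6 := congrArg (fun a : L => (a : ℂ)) h5
    push_cast at h6
    exact_mod_cast h6
  obtain ⟨τ, hτ⟩ := aux_exists_eq_of_sum_pow_eq hk hζ
    (fun σ : L ≃ₐ[F] L => ((σ z : L) : ℂ)) (fun σ : L ≃ₐ[F] L => ((σ w : L) : ℂ))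
    hupow hvpow hsum 1
  refine ⟨τ, Subtype.coe_injective ?_⟩
  simpa using hτ

lemma aux_key {G : Type*} [Group G] [Fintype G] {F : Type*} [Field F]
    (H : Subgroup G) (t : H → F) (n : F) (hn : n ≠ 0) (g : G) :
    (MonoidAlgebra.single g⁻¹ (1 : F) *
        (n⁻¹ • ∑ x : H, MonoidAlgebra.single ((x : G))⁻¹ (t x)) *
        MonoidAlgebra.single g (1 : F) =
      n⁻¹ • ∑ x : H, MonoidAlgebra.single ((x : G))⁻¹ (t x)) ↔
    ∀ z : G, (if h : g * z * g⁻¹ ∈ H then t ⟨g * z * g⁻¹, h⟩ else 0) =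
      (if h : z ∈ H then t ⟨z, h⟩ else 0) := by
  set β : G → F := fun z => if h : z ∈ H then t ⟨z, h⟩ else 0 with hβ
  have hβmem : ∀ (z : G) (h : z ∈ H), β z = t ⟨z, h⟩ := fun z h => dif_pos h
  have hβnot : ∀ (z : G), ¬ z ∈ H → β z = 0 := fun z h => dif_neg h
  have happ1 : ∀ y : G,
      (∑ x : H, MonoidAlgebra.single ((x : G))⁻¹ (t x)).coeff y = β y⁻¹ := by
    intro y
    rw [MonoidAlgebra.coeff_sum, Finset.sum_apply']
    simp only [MonoidAlgebra.coeff_single]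
    by_cases hy : y⁻¹ ∈ H
    · rw [Finset.sum_eq_single (⟨y⁻¹, hy⟩ : H)]
      · rw [Finsupp.single_apply, if_pos (by simp), hβmem y⁻¹ hy]
      · intro b _ hb
        rw [Finsupp.single_apply, if_neg]
        intro hcontra
        exact hb (Subtype.ext (by rw [← inv_inv (b : G), hcontra]))
      · intro hcon
        exact absurd (Finset.mem_univ _) hcon
    · rw [Finset.sum_eq_zero, (hβnot y⁻¹ hy).symm]
      intro b _
      rw [Finsupp.single_apply, if_neg]
      intro hcontra
      apply hy
      rw [← hcontra, inv_inv]
      exact b.2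
  have happ2 : ∀ y : G,
      (∑ x : H, MonoidAlgebra.single (g⁻¹ * ((x : G))⁻¹ * g) (t x)).coeff y
        = β (g * y⁻¹ * g⁻¹) := by
    intro y
    rw [MonoidAlgebra.coeff_sum, Finset.sum_apply']
    simp only [MonoidAlgebra.coeff_single]
    by_cases hy : g * y⁻¹ * g⁻¹ ∈ H
    · rw [Finset.sum_eq_single (⟨g * y⁻¹ * g⁻¹, hy⟩ : H)]
      · rw [Finsupp.single_apply, if_pos (by group), hβmem _ hy]
      · intro b _ hb
        rw [Finsupp.single_apply, if_neg]
        intro hcontra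
        refine hb (Subtype.ext ?_)
        have h2 : (b : G)⁻¹ = g * y * g⁻¹ := by
          have := congrArg (fun w => g * w * g⁻¹) hcontra
          simpa [mul_assoc] using this
        rw [← inv_inv (b : G), h2]
        group
      · intro hcon
        exact absurd (Finset.mem_univ _) hcon
    · rw [Finset.sum_eq_zero, (hβnot _ hy).symm]
      intro b _
      rw [Finsupp.single_apply, if_neg]
      intro hcontra
      apply hy
      have h2 : (b : G)⁻¹ = g * y * g⁻¹ := by
        have := congrArg (fun w => g * w * g⁻¹) hcontra
        simpa [mul_assoc] using this
      have hbinv : (b : G)⁻¹ ∈ H := inv_mem b.2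
      rw [h2] at hbinv
      have h3 : g * y⁻¹ * g⁻¹ = (g * y * g⁻¹)⁻¹ := by group
      rw [h3]
      exact inv_mem hbinv
  have lhs_eq : MonoidAlgebra.single g⁻¹ (1 : F) *
      (n⁻¹ • ∑ x : H, MonoidAlgebra.single ((x : G))⁻¹ (t x)) *
      MonoidAlgebra.single g (1 : F) =
      n⁻¹ • ∑ x : H, MonoidAlgebra.single (g⁻¹ * ((x : G))⁻¹ * g) (t x) := by
    rw [mul_smul_comm, smul_mul_assoc]
    congr 1
    rw [Finset.mul_sum, Finset.sum_mul]
    refine Finset.sum_congr rfl fun x _ => ?_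
    rw [MonoidAlgebra.single_mul_single, MonoidAlgebra.single_mul_single, one_mul, mul_one]
  rw [lhs_eq]
  constructor
  · intro hEq z
    have h0 : n⁻¹ * ((∑ x : H, MonoidAlgebra.single (g⁻¹ * ((x : G))⁻¹ * g) (t x)).coeff z⁻¹)
        = n⁻¹ * ((∑ x : H, MonoidAlgebra.single ((x : G))⁻¹ (t x)).coeff z⁻¹) :=
      congrArg (fun v : MonoidAlgebra F G => v.coeff z⁻¹) hEq
    rw [happ1, happ2] at h0
    simp only [inv_inv] at h0
    exact mul_left_cancel₀ (inv_ne_zero hn) h0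
  · intro hcond
    refine MonoidAlgebra.ext (Finsupp.ext fun y => ?_)
    show n⁻¹ * (∑ x : H, MonoidAlgebra.single (g⁻¹ * ((x : G))⁻¹ * g) (t x)).coeff y = n⁻¹ * (∑ x : H, MonoidAlgebra.single ((x : G))⁻¹ (t x)).coeff y
    rw [happ1, happ2]
    exact congrArg (fun a => n⁻¹ * a) (hcond y⁻¹)

lemma aux_cond_iff {G : Type*} [Group G] [Fintype G]
    (F : IntermediateField ℚ ℂ) (L : IntermediateField F ℂ)
    [FiniteDimensional F L] [IsGalois F L]
    (H K : Subgroup G) (hKH : K ≤ H)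
    (hHnormal : ∀ n ∈ (Subgroup.normalizer (K : Set G)), ∀ h ∈ H, n * h * n⁻¹ ∈ H)
    {k : ℕ} (hk0 : k ≠ 0) {ζ : ℂ} (hζ : IsPrimitiveRoot ζ k)
    (c : G) (hcH : c ∈ H) (hcgen : ∀ x ∈ H, ∃ i : ℕ, (c ^ i)⁻¹ * x ∈ K)
    (hck : c ^ k ∈ K)
    (χ : H →* ℂ) (hker : ∀ x : H, χ x = 1 ↔ (x : G) ∈ K)
    (hmem : ∀ x : H, χ x ∈ L) (g : G) :
    (∀ z : G, (if h : g * z * g⁻¹ ∈ H then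
        Algebra.trace F L ⟨χ ⟨g * z * g⁻¹, h⟩, hmem ⟨g * z * g⁻¹, h⟩⟩ else 0) =
      (if h : z ∈ H then Algebra.trace F L ⟨χ ⟨z, h⟩, hmem ⟨z, h⟩⟩ else 0)) ↔
    (g ∈ (Subgroup.normalizer (H : Set G)) ∧ g ∈ (Subgroup.normalizer (K : Set G)) ∧
      ∃ σ : L ≃ₐ[F] L,
        ∀ (x : G) (hx : x ∈ H) (hgx : g * x * g⁻¹ ∈ H),
          χ ⟨g * x * g⁻¹, hgx⟩ = σ ⟨χ ⟨x, hx⟩, hmem ⟨x, hx⟩⟩) := by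
  have hHpos : 0 < Nat.card H := Nat.card_pos
  have hNcard : Nat.card H ≠ 0 := hHpos.ne'
  set β : G → F := fun z =>
    if h : z ∈ H then Algebra.trace F L ⟨χ ⟨z, h⟩, hmem ⟨z, h⟩⟩ else 0 with hβ
  have hβmem : ∀ (z : G) (h : z ∈ H),
      β z = Algebra.trace F L ⟨χ ⟨z, h⟩, hmem ⟨z, h⟩⟩ := fun z h => dif_pos h
  have hβnot : ∀ (z : G), ¬ z ∈ H → β z = 0 := fun z h => dif_neg h
  constructor
  · intro hcen0
    have hcen : ∀ z : G, β (g * z * g⁻¹) = β z := hcen0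
    have hpowH : ∀ (z : G) (h : z ∈ H),
        ((⟨χ ⟨z, h⟩, hmem ⟨z, h⟩⟩ : L)) ^ (Nat.card H) = 1 := by
      intro z h
      refine Subtype.ext ?_
      push_cast
      rw [← map_pow]
      have h1 : (⟨z, h⟩ : H) ^ (Nat.card H) = 1 := pow_card_eq_one'
      rw [h1, map_one]
    have hfrk : (0:ℕ) < Module.finrank F L := Module.finrank_pos
    have hKiff : ∀ z : G, z ∈ K ↔ β z = ((Module.finrank F L : F)) := by
      intro z
      constructor
      · intro hz
        have hzH : z ∈ H := hKH hz
        rw [hβmem z hzH]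
        refine (aux_trace_eq_iff F L _ (Nat.card H) hNcard (hpowH z hzH)).mpr ?_
        exact Subtype.ext (by simpa using (hker ⟨z, hzH⟩).mpr hz)
      · intro hz
        by_cases hzH : z ∈ H
        · rw [hβmem z hzH] at hz
          have h1 := (aux_trace_eq_iff F L _ (Nat.card H) hNcard (hpowH z hzH)).mp hz
          have hχ1 : χ ⟨z, hzH⟩ = 1 := by
            have := congrArg (fun w : L => (w : ℂ)) h1
            simpa using this
          exact (hker ⟨z, hzH⟩).mp hχ1
        · rw [hβnot z hzH] at hz
          exfalso
          have : ((Module.finrank F L : F)) ≠ 0 := by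
            exact_mod_cast Nat.cast_ne_zero.mpr hfrk.ne'
          exact this hz.symm
    have hgK : g ∈ (Subgroup.normalizer (K : Set G)) := by
      rw [Subgroup.mem_normalizer_iff]
      intro z
      rw [hKiff z, hKiff (g * z * g⁻¹), hcen z]
    have hgH : g ∈ (Subgroup.normalizer (H : Set G)) := by
      rw [Subgroup.mem_normalizer_iff]
      intro h
      constructor
      · intro hh
        exact hHnormal g hgK h hh
      · intro hh
        have := hHnormal g⁻¹ (inv_mem hgK) _ hh
        simpa [mul_assoc] using this
    refine ⟨hgH, hgK, ?_⟩
    have hgcH : g * c * g⁻¹ ∈ H := (Subgroup.mem_normalizer_iff.mp hgH c).mp hcH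
    set zL : L := ⟨χ ⟨c, hcH⟩, hmem ⟨c, hcH⟩⟩ with hzL
    set wL : L := ⟨χ ⟨g * c * g⁻¹, hgcH⟩, hmem ⟨g * c * g⁻¹, hgcH⟩⟩ with hwL
    have hzk : zL ^ k = 1 := by
      refine Subtype.ext ?_
      push_cast
      rw [← map_pow]
      refine (hker _).mpr ?_
      have hc' : (((⟨c, hcH⟩ : H) ^ k : H) : G) = c ^ k := by push_cast; rfl
      rw [hc']
      exact hck
    have hwk : wL ^ k = 1 := by
      refine Subtype.ext ?_
      push_cast
      rw [← map_pow]
      refine (hker _).mpr ?_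
      have hc' : (((⟨g * c * g⁻¹, hgcH⟩ : H) ^ k : H) : G) = g * c ^ k * g⁻¹ := by
        push_cast
        rw [conj_pow]
      rw [hc']
      exact (Subgroup.mem_normalizer_iff.mp hgK _).mp hck
    have htr : ∀ i : ℕ, Algebra.trace F L (wL ^ i) = Algebra.trace F L (zL ^ i) := by
      intro i
      have hciH : c ^ i ∈ H := pow_mem hcH i
      have hgciH : g * c ^ i * g⁻¹ ∈ H := (Subgroup.mem_normalizer_iff.mp hgH _).mp hciH
      have h1 := hcen (c ^ i)
      rw [hβmem _ hgciH, hβmem _ hciH] at h1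
      have e1 : (⟨χ ⟨g * c ^ i * g⁻¹, hgciH⟩, hmem _⟩ : L) = wL ^ i := by
        refine Subtype.ext ?_
        push_cast
        rw [← map_pow]
        congr 1
        refine Subtype.ext ?_
        push_cast
        rw [conj_pow]
      have e2 : (⟨χ ⟨c ^ i, hciH⟩, hmem _⟩ : L) = zL ^ i := by
        refine Subtype.ext ?_
        push_cast
        rw [← map_pow]
        congr 1
      rw [e1, e2] at h1
      exact h1
    obtain ⟨τ, hτz⟩ := aux_galois F L hk0 hζ zL wL hzk hwk htr
    refine ⟨τ, ?_⟩
    intro x hx hgx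
    obtain ⟨i, hκK⟩ := hcgen x hx
    have hciH : c ^ i ∈ H := pow_mem hcH i
    have hxdecomp : (⟨x, hx⟩ : H) = ⟨c, hcH⟩ ^ i * ⟨(c ^ i)⁻¹ * x, hKH hκK⟩ := by
      refine Subtype.ext ?_
      push_cast
      group
    have hκ1 : χ ⟨(c ^ i)⁻¹ * x, hKH hκK⟩ = 1 := (hker _).mpr (by simpa using hκK)
    have hχx : χ ⟨x, hx⟩ = (χ ⟨c, hcH⟩) ^ i := by
      rw [hxdecomp, map_mul, map_pow, hκ1, mul_one]
    have hLx : (⟨χ ⟨x, hx⟩, hmem ⟨x, hx⟩⟩ : L) = zL ^ i := by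
      refine Subtype.ext ?_
      push_cast
      rw [hχx]
    have hκ'K : g * ((c ^ i)⁻¹ * x) * g⁻¹ ∈ K :=
      (Subgroup.mem_normalizer_iff.mp hgK _).mp hκK
    have hgxdecomp : (⟨g * x * g⁻¹, hgx⟩ : H) =
        ⟨g * c * g⁻¹, hgcH⟩ ^ i * ⟨g * ((c ^ i)⁻¹ * x) * g⁻¹, hKH hκ'K⟩ := by
      refine Subtype.ext ?_
      push_cast
      rw [conj_pow]
      group
    have hκ'1 : χ ⟨g * ((c ^ i)⁻¹ * x) * g⁻¹, hKH hκ'K⟩ = 1 :=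
      (hker _).mpr (by simpa using hκ'K)
    have hχgx : χ ⟨g * x * g⁻¹, hgx⟩ = (χ ⟨g * c * g⁻¹, hgcH⟩) ^ i := by
      rw [hgxdecomp, map_mul, map_pow, hκ'1, mul_one]
    rw [hχgx, hLx, map_pow, hτz]
    push_cast
    ring
  · rintro ⟨hgH, hgK, σ, hσ⟩ z
    by_cases hz : z ∈ H
    · have hgz : g * z * g⁻¹ ∈ H := (Subgroup.mem_normalizer_iff.mp hgH z).mp hz
      rw [dif_pos hz, dif_pos hgz]
      have h1 : (⟨χ ⟨g * z * g⁻¹, hgz⟩, hmem _⟩ : L) = σ ⟨χ ⟨z, hz⟩, hmem ⟨z, hz⟩⟩ :=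
        Subtype.ext (hσ z hz hgz)
      rw [h1]
      exact Algebra.trace_eq_of_algEquiv σ _
    · have hgz : ¬ g * z * g⁻¹ ∈ H := fun h =>
        hz ((Subgroup.mem_normalizer_iff.mp hgH z).mpr h)
      rw [dif_neg hz, dif_neg hgz]

/-- let `K ⊴ H ≤ G` with `H/K` cyclic, `H ⊴ N_G(K)`, and `F` a number field.
A Galois orbit `C` of faithful characters of `H/K` is represented by a character `χ` of `H`
with kernel `K` and values in `F(ζ_{[H:K]})`.  Then
`Cen_G(ε_C(H,K)) = E_F(G,H/K)`: an element `g ∈ G` centralizes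
`ε_C(H,K) = (1/|H|) ∑_{h∈H} Tr_{F(ζ_k)/F}(χ(hK)) h⁻¹` iff `g ∈ N_G(H) ∩ N_G(K)` and
the conjugate orbit `C^g` equals `C`, i.e. `χ^g = σ ∘ χ` for some `σ ∈ Gal(F(ζ_k)/F)`
(where `χ^g(gxg⁻¹) = χ(x)`... i.e. `χ^g(y) = χ(g y g⁻¹)`). -/
theorem stmt7 (G : Type*) [Group G] [Fintype G]
    (F : IntermediateField ℚ ℂ) [FiniteDimensional ℚ F]
    (H K : Subgroup G) (hKH : K ≤ H) (hHN : H ≤ (Subgroup.normalizer (K : Set G)))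
    (hHnormal : ∀ n ∈ (Subgroup.normalizer (K : Set G)), ∀ h ∈ H, n * h * n⁻¹ ∈ H)
    (k : ℕ) (hk : Nat.card K * k = Nat.card H)
    (hcyc : ∃ c ∈ H, ∀ x ∈ H, ∃ i : ℕ, (c ^ i)⁻¹ * x ∈ K)
    (ζ : ℂ) (hζ : IsPrimitiveRoot ζ k)
    (χ : H →* ℂ) (hker : ∀ x : H, χ x = 1 ↔ (x : G) ∈ K)
    (hmem : ∀ x : H, χ x ∈ IntermediateField.adjoin F {ζ}) :
    ∀ g : G,
      (MonoidAlgebra.single g⁻¹ (1 : F) *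
        ((Nat.card H : F)⁻¹ • ∑ x : H, MonoidAlgebra.single ((x : G))⁻¹
          (Algebra.trace F (IntermediateField.adjoin F {ζ}) ⟨χ x, hmem x⟩)) *
        MonoidAlgebra.single g (1 : F) =
       ((Nat.card H : F)⁻¹ • ∑ x : H, MonoidAlgebra.single ((x : G))⁻¹
          (Algebra.trace F (IntermediateField.adjoin F {ζ}) ⟨χ x, hmem x⟩))) ↔
      (g ∈ (Subgroup.normalizer (H : Set G)) ∧ g ∈ (Subgroup.normalizer (K : Set G)) ∧
        ∃ σ : IntermediateField.adjoin F {ζ} ≃ₐ[F] IntermediateField.adjoin F {ζ},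
          ∀ (x : G) (hx : x ∈ H) (hgx : g * x * g⁻¹ ∈ H),
            χ ⟨g * x * g⁻¹, hgx⟩ = σ ⟨χ ⟨x, hx⟩, hmem ⟨x, hx⟩⟩) := by
  classical
  have hHpos : 0 < Nat.card H := Nat.card_pos
  have hKpos : 0 < Nat.card K := Nat.card_pos
  have hk0 : k ≠ 0 := by
    intro h
    rw [h, mul_zero] at hk
    omega
  have hint : IsIntegral F ζ := by
    refine ⟨Polynomial.X ^ k - 1, Polynomial.monic_X_pow_sub_C 1 hk0, ?_⟩
    simp [hζ.pow_eq_one, sub_eq_zero]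
  haveI hfd : FiniteDimensional F (IntermediateField.adjoin F {ζ}) :=
    IntermediateField.adjoin.finiteDimensional hint
  haveI hgal : IsGalois F (IntermediateField.adjoin F {ζ}) := by
    haveI : NeZero k := ⟨hk0⟩
    have h1 : IsCyclotomicExtension {k} F
        (IntermediateField.adjoin F {ζ}) := by
      have Hs := IntermediateField.adjoin_simple_toSubalgebra_of_isAlgebraic hint.isAlgebraic
      refine IsCyclotomicExtension.equiv _ _ _ (h := ?_) (.refl : F⟮ζ⟯.toSubalgebra ≃ₐ[F] _)
      rw [Hs]
      exact IsPrimitiveRoot.adjoin_isCyclotomicExtension F (n := k) hζ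
    exact IsCyclotomicExtension.isGalois {k} F _
  have hnF : ((Nat.card H : F)) ≠ 0 := by
    exact_mod_cast Nat.cast_ne_zero.mpr hHpos.ne'
  obtain ⟨c, hcH, hcgen⟩ := hcyc
  haveI hKnormal : (K.subgroupOf H).Normal := by
    constructor
    intro n hn h
    rw [Subgroup.mem_subgroupOf] at hn ⊢
    push_cast
    exact (Subgroup.mem_normalizer_iff.mp (hHN h.2) _).mp hn
  have hQcard : Nat.card (H ⧸ K.subgroupOf H) = k := by
    have h1 := Subgroup.card_eq_card_quotient_mul_card_subgroup (K.subgroupOf H)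
    have h2 : Nat.card (K.subgroupOf H) = Nat.card K :=
      Nat.card_congr (Subgroup.subgroupOfEquivOfLe hKH).toEquiv
    rw [h2] at h1
    refine Nat.eq_of_mul_eq_mul_left hKpos ?_
    rw [hk, h1, mul_comm]
  have hck : c ^ k ∈ K := by
    have h1 : ((⟨c, hcH⟩ : H) ^ k : H) ∈ K.subgroupOf H := by
      rw [← QuotientGroup.eq_one_iff]
      rw [QuotientGroup.mk_pow]
      rw [← hQcard]
      exact pow_card_eq_one'
    rw [Subgroup.mem_subgroupOf] at h1
    simpa using h1
  intro g
  exact (aux_key H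
      (fun x : H => Algebra.trace F (IntermediateField.adjoin F {ζ}) ⟨χ x, hmem x⟩)
      (Nat.card H : F) hnF g).trans
    (aux_cond_iff F (IntermediateField.adjoin F {ζ}) H K hKH hHnormal hk0 hζ
      c hcH hcgen hck χ hker hmem g)
end

section
/- Let K ⊴ H ≤ G with H/K cyclic of order k and let N = N_G(H) ∩ N_G(K) act on the Galois orbits of faithful characters of H/K by conjugation. Then for any orbit C containing a faithful character χ and any generator hK of H/K, the stabilizer of C in N equals {g ∈ N : g⁻¹hgK = h^iK for some i ∈ I_k(F)}, and this stabilizer is independent of the choice of C and of the generator hK. -/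
set_option synthInstance.maxHeartbeats 1000000
set_option maxHeartbeats 1000000

open IntermediateField

/-- let `K ⊴ H ≤ G` with `H/K` cyclic of order `k`, and let
`N = N_G(H) ∩ N_G(K)` act on the Galois orbits of faithful characters of `H/K` by
conjugation.  For any faithful character `χ` of `H/K` (realized as a character of `H`
with kernel `K` and values in `F(ζ_k)`) representing an orbit `C`, and any generator
`hK` of `H/K`, an element `g ∈ N` stabilizes `C` (i.e. `χ^g = σ∘χ` for some
`σ ∈ Gal(F(ζ_k)/F)`) iff `g⁻¹hgK = h^iK` for some `i ∈ I_k(F)` (i.e. some `i` with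
`σ(ζ_k) = ζ_k^i` for some `σ ∈ Gal(F(ζ_k)/F)`).  Since `χ` and the generator `h` are
arbitrary, the stabilizer is independent of the choice of the orbit `C` and of `h`. -/
theorem stmt8 (G : Type*) [Group G] [Fintype G]
    (F : IntermediateField ℚ ℂ) [FiniteDimensional ℚ F]
    (H K : Subgroup G) (hKH : K ≤ H) (hKnormH : ∀ x ∈ H, ∀ y ∈ K, x * y * x⁻¹ ∈ K)
    (k : ℕ) (hk : Nat.card K * k = Nat.card H)
    (ζ : ℂ) (hζ : IsPrimitiveRoot ζ k)
    (χ : H →* ℂ) (hker : ∀ x : H, χ x = 1 ↔ (x : G) ∈ K)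
    (hmem : ∀ x : H, χ x ∈ IntermediateField.adjoin F {ζ}) :
    ∀ h : G, h ∈ H → (∀ x ∈ H, ∃ i : ℕ, (h ^ i)⁻¹ * x ∈ K) →
    ∀ g : G, g ∈ Subgroup.normalizer (H : Set G) ⊓ Subgroup.normalizer (K : Set G) →
      ((∃ σ : IntermediateField.adjoin F {ζ} ≃ₐ[F] IntermediateField.adjoin F {ζ},
          ∀ (x : G) (hx : x ∈ H) (hgx : g * x * g⁻¹ ∈ H),
            χ ⟨g * x * g⁻¹, hgx⟩ = σ ⟨χ ⟨x, hx⟩, hmem ⟨x, hx⟩⟩) ↔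
       (∃ (i : ℕ) (σ : IntermediateField.adjoin F {ζ} ≃ₐ[F] IntermediateField.adjoin F {ζ}),
          σ ⟨ζ, IntermediateField.mem_adjoin_simple_self F ζ⟩ =
            ⟨ζ, IntermediateField.mem_adjoin_simple_self F ζ⟩ ^ i ∧
          (h ^ i)⁻¹ * (g⁻¹ * h * g) ∈ K)) := by
  intro h hhH hgen g hg
  classical
  obtain ⟨hgH, hgK⟩ := Subgroup.mem_inf.mp hg
  have hconjH' : ∀ x : G, x ∈ H → g⁻¹ * x * g ∈ H := fun x hx =>
    (Subgroup.mem_normalizer_iff''.mp hgH x).mp hx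
  have hconjK' : ∀ x : G, x ∈ K → g⁻¹ * x * g ∈ K := fun x hx =>
    (Subgroup.mem_normalizer_iff''.mp hgK x).mp hx
  set hh : H := ⟨h, hhH⟩ with hhdef
  have hH0 : Nat.card H ≠ 0 := Nat.card_pos.ne'
  have hk0 : 0 < k := by
    rcases Nat.eq_zero_or_pos k with h0 | h0
    · exact absurd (by rw [← hk, h0, mul_zero]) (Ne.symm hH0)
    · exact h0
  haveI : NeZero k := ⟨hk0.ne'⟩
  have hζ0 : ζ ≠ 0 := hζ.ne_zero hk0.ne'
  haveI hnorm : (K.subgroupOf H).Normal := by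
    constructor
    intro n hn x
    rw [Subgroup.mem_subgroupOf] at hn ⊢
    simpa using hKnormH x x.2 n hn
  have hcardQ : Nat.card (H ⧸ K.subgroupOf H) = k := by
    have h1 : Nat.card H = Nat.card (H ⧸ K.subgroupOf H) * Nat.card (K.subgroupOf H) :=
      Subgroup.card_eq_card_quotient_mul_card_subgroup _
    have h2 : Nat.card (K.subgroupOf H) = Nat.card K :=
      Nat.card_congr (Subgroup.subgroupOfEquivOfLe hKH).toEquiv
    have h3 : k * Nat.card K = Nat.card (H ⧸ K.subgroupOf H) * Nat.card K := by
      rw [mul_comm k, hk, h1, h2]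
    exact (Nat.eq_of_mul_eq_mul_right Nat.card_pos h3).symm
  have hgenQ : ∀ y : H ⧸ K.subgroupOf H,
      y ∈ Subgroup.zpowers ((hh : H) : H ⧸ K.subgroupOf H) := by
    intro y
    induction y using QuotientGroup.induction_on with
    | H x =>
      obtain ⟨i, hi⟩ := hgen x x.2
      refine Subgroup.mem_zpowers_iff.mpr ⟨(i : ℤ), ?_⟩
      rw [zpow_natCast, ← QuotientGroup.mk_pow]
      rw [QuotientGroup.eq]
      rw [Subgroup.mem_subgroupOf]
      simpa using hi
  have horder : orderOf ((hh : H) : H ⧸ K.subgroupOf H) = k := by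
    rw [orderOf_eq_card_of_forall_mem_zpowers hgenQ, hcardQ]
  have hχpow : ∀ n : ℕ, χ hh ^ n = 1 ↔ k ∣ n := by
    intro n
    rw [← map_pow, hker (hh ^ n), ← Subgroup.mem_subgroupOf,
      ← QuotientGroup.eq_one_iff, QuotientGroup.mk_pow, ← orderOf_dvd_iff_pow_eq_one, horder]
  have hprim : IsPrimitiveRoot (χ hh) k :=
    ⟨(hχpow k).mpr dvd_rfl, fun l hl => (hχpow l).mp hl⟩
  obtain ⟨a, hak, ha⟩ := hζ.eq_pow_of_pow_eq_one hprim.pow_eq_one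
  have hacop : a.Coprime k := (hζ.pow_iff_coprime hk0 a).mp (ha ▸ hprim)
  have hcoset : ∀ (x : H) (m : ℕ), (h ^ m)⁻¹ * (x : G) ∈ K → χ x = χ hh ^ m := by
    intro x m hm
    have h1 : χ ((hh ^ m)⁻¹ * x) = 1 := by
      rw [hker]
      simpa using hm
    calc χ x = χ (hh ^ m * ((hh ^ m)⁻¹ * x)) := by rw [mul_inv_cancel_left]
    _ = χ (hh ^ m) * χ ((hh ^ m)⁻¹ * x) := map_mul _ _ _
    _ = χ hh ^ m := by rw [h1, map_pow, mul_one]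
  set ζ' : IntermediateField.adjoin F {ζ} :=
    ⟨ζ, IntermediateField.mem_adjoin_simple_self F ζ⟩ with hζ'def
  have hζ'coe : ∀ n : ℕ, ((ζ' ^ n : IntermediateField.adjoin F {ζ}) : ℂ) = ζ ^ n := by
    intro n
    push_cast [hζ'def]
    rfl
  have hmk : ∀ (c : ℂ) (p : c ∈ IntermediateField.adjoin F {ζ}) (n : ℕ), c = ζ ^ n →
      (⟨c, p⟩ : IntermediateField.adjoin F {ζ}) = ζ' ^ n := by
    intro c p n hc
    apply Subtype.ext
    rw [hζ'coe]
    exact hc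
  have hσapp : ∀ (σ : IntermediateField.adjoin F {ζ} ≃ₐ[F] IntermediateField.adjoin F {ζ})
      (t : ℕ), σ ζ' = ζ' ^ t →
      ∀ (n : ℕ) (c : ℂ) (p : c ∈ IntermediateField.adjoin F {ζ}), c = ζ ^ n →
      ((σ ⟨c, p⟩ : IntermediateField.adjoin F {ζ}) : ℂ) = ζ ^ (t * n) := by
    intro σ t hσ n c p hc
    rw [hmk c p n hc, map_pow, hσ, ← pow_mul, hζ'coe]
  have hσt : ∀ σ : IntermediateField.adjoin F {ζ} ≃ₐ[F] IntermediateField.adjoin F {ζ},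
      ∃ t : ℕ, σ ζ' = ζ' ^ t := by
    intro σ
    have hone : ζ' ^ k = 1 := by
      apply Subtype.ext
      rw [hζ'coe]
      simpa using hζ.pow_eq_one
    have h1 : ((σ ζ' : IntermediateField.adjoin F {ζ}) : ℂ) ^ k = 1 := by
      have h2 : σ ζ' ^ k = 1 := by rw [← map_pow, hone, map_one]
      calc ((σ ζ' : IntermediateField.adjoin F {ζ}) : ℂ) ^ k
          = ((σ ζ' ^ k : IntermediateField.adjoin F {ζ}) : ℂ) := by push_cast; rfl
      _ = 1 := by rw [h2]; rfl
    obtain ⟨t, _, ht⟩ := hζ.eq_pow_of_pow_eq_one h1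
    refine ⟨t, Subtype.ext ?_⟩
    rw [hζ'coe]
    exact ht.symm
  have hdvd : ∀ m n : ℕ, ζ ^ m = ζ ^ n → (k : ℤ) ∣ (m : ℤ) - n := by
    intro m n hmn
    have h1 : ζ ^ ((m : ℤ) - n) = 1 := by
      rw [zpow_sub₀ hζ0, zpow_natCast, zpow_natCast, hmn, div_self (pow_ne_zero _ hζ0)]
    exact (hζ.zpow_eq_one_iff_dvd _).mp h1
  constructor
  · rintro ⟨σ, hσ⟩
    obtain ⟨j, hj⟩ := hgen (g⁻¹ * h * g) (hconjH' h hhH)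
    obtain ⟨t, ht⟩ := hσt σ
    refine ⟨j, σ.symm, ?_, hj⟩
    have hx0 : χ (⟨g⁻¹ * h * g, hconjH' h hhH⟩ : H) = ζ ^ (a * j) := by
      rw [hcoset _ j hj, ← ha, ← pow_mul]
    have e : g * (g⁻¹ * h * g) * g⁻¹ = h := by group
    have hgx' : g * (g⁻¹ * h * g) * g⁻¹ ∈ H := by rw [e]; exact hhH
    have h2 := hσ (g⁻¹ * h * g) (hconjH' h hhH) hgx'
    have h3 : χ (⟨g * (g⁻¹ * h * g) * g⁻¹, hgx'⟩ : H) = χ hh :=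
      congrArg χ (Subtype.ext e)
    have key : ζ ^ a = ζ ^ (t * (a * j)) := by
      rw [ha, ← h3, h2, hσapp σ t ht (a * j) _ _ hx0]
    have hdvd1 : (k : ℤ) ∣ (a : ℤ) * ((t : ℤ) * j - 1) := by
      have h4 := hdvd (t * (a * j)) a key.symm
      have h5 : (a : ℤ) * ((t : ℤ) * j - 1) = ((t * (a * j) : ℕ) : ℤ) - a := by
        push_cast; ring
      rw [h5]
      exact h4
    have hcop : IsCoprime ((k : ℤ)) ((a : ℤ)) := Nat.Coprime.isCoprime hacop.symm
    have hdvd2 : (k : ℤ) ∣ (t : ℤ) * j - 1 := hcop.dvd_of_dvd_mul_left hdvd1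
    have hζtj : ζ' ^ (t * j) = ζ' := by
      apply Subtype.ext
      rw [hζ'coe]
      have h6 : ζ ^ (((t * j : ℕ) : ℤ)) = ζ ^ (1 : ℤ) := by
        rw [show ((t * j : ℕ) : ℤ) = ((t : ℤ) * j - 1) + 1 by push_cast; ring,
          zpow_add₀ hζ0, (hζ.zpow_eq_one_iff_dvd _).mpr hdvd2, one_mul]
      rw [zpow_natCast, zpow_one] at h6
      exact h6
    apply σ.injective
    rw [AlgEquiv.apply_symm_apply, map_pow, ht, ← pow_mul]
    exact hζtj.symm
  · rintro ⟨i, σ, hσζ, hKi⟩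
    refine ⟨σ.symm, ?_⟩
    intro x hx hgx
    obtain ⟨m, hm⟩ := hgen (g * x * g⁻¹) hgx
    have h1 : χ (⟨g * x * g⁻¹, hgx⟩ : H) = ζ ^ (a * m) := by
      rw [hcoset _ m hm, ← ha, ← pow_mul]
    have hu : χ (⟨g⁻¹ * h * g, hconjH' h hhH⟩ : H) = χ hh ^ i := hcoset _ i hKi
    have hk0K : (h ^ m)⁻¹ * (g * x * g⁻¹) ∈ K := hm
    have hvK : g⁻¹ * ((h ^ m)⁻¹ * (g * x * g⁻¹)) * g ∈ K := hconjK' _ hk0K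
    have conjpow : ∀ (u v : G) (n : ℕ), (u⁻¹ * v * u) ^ n = u⁻¹ * v ^ n * u := by
      intro u v n
      induction n with
      | zero => simp
      | succ p ih => rw [pow_succ, pow_succ, ih]; group
    have hxdec : x = (g⁻¹ * h * g) ^ m * (g⁻¹ * ((h ^ m)⁻¹ * (g * x * g⁻¹)) * g) := by
      rw [conjpow]
      group
    have hχx : χ (⟨x, hx⟩ : H) = ζ ^ (a * (i * m)) := by
      have e1 : (⟨x, hx⟩ : H) = (⟨g⁻¹ * h * g, hconjH' h hhH⟩ : H) ^ m *
          ⟨g⁻¹ * ((h ^ m)⁻¹ * (g * x * g⁻¹)) * g, hKH hvK⟩ := by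
        apply Subtype.ext
        push_cast
        exact hxdec
      rw [e1, map_mul, map_pow, hu, (hker ⟨g⁻¹ * ((h ^ m)⁻¹ * (g * x * g⁻¹)) * g, hKH hvK⟩).mpr hvK, mul_one, ← pow_mul, ← ha, ← pow_mul,
        mul_comm i m, mul_comm m i]
    have key : σ ⟨χ ⟨g * x * g⁻¹, hgx⟩, hmem ⟨g * x * g⁻¹, hgx⟩⟩ =
        ⟨χ ⟨x, hx⟩, hmem ⟨x, hx⟩⟩ := by
      apply Subtype.ext
      rw [hσapp σ i hσζ (a * m) _ _ h1]
      show ζ ^ (i * (a * m)) = ((⟨χ ⟨x, hx⟩, hmem ⟨x, hx⟩⟩ :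
        IntermediateField.adjoin F {ζ}) : ℂ)
      rw [show ((⟨χ ⟨x, hx⟩, hmem ⟨x, hx⟩⟩ :
        IntermediateField.adjoin F {ζ}) : ℂ) = χ ⟨x, hx⟩ from rfl, hχx]
      ring_nf
    have h7 : (⟨χ ⟨g * x * g⁻¹, hgx⟩, hmem ⟨g * x * g⁻¹, hgx⟩⟩ :
        IntermediateField.adjoin F {ζ}) = σ.symm ⟨χ ⟨x, hx⟩, hmem ⟨x, hx⟩⟩ :=
      (AlgEquiv.eq_symm_apply σ).mpr key
    calc χ (⟨g * x * g⁻¹, hgx⟩ : H)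
        = ((⟨χ ⟨g * x * g⁻¹, hgx⟩, hmem ⟨g * x * g⁻¹, hgx⟩⟩ :
            IntermediateField.adjoin F {ζ}) : ℂ) := rfl
    _ = ((σ.symm ⟨χ ⟨x, hx⟩, hmem ⟨x, hx⟩⟩ : IntermediateField.adjoin F {ζ}) : ℂ) := by
        rw [h7]
end

section
/- Let G be a finite strongly monomial group of exponent e and F a number field. If [F(ζ_e) : F] = φ(e), then the number of simple components of FG equals the number of simple components of ℚG. -/
set_option synthInstance.maxHeartbeats 1000000
set_option maxHeartbeats 1000000

open IntermediateField
open scoped Classical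

/-- The number of simple components of a semisimple ring, counted as the number of
primitive central idempotents. -/
noncomputable def numSimple (R : Type*) [Ring R] : ℕ :=
  Nat.card {e : R // IsPrimitiveCentralIdempotent e}

noncomputable def hatQ {G : Type*} [Group G] [Fintype G] (A : Subgroup G) :
    MonoidAlgebra ℚ G :=
  (Nat.card A : ℚ)⁻¹ • ∑ a : A, MonoidAlgebra.single (a : G) (1 : ℚ)

/-- `e = ε(H,K) = K̂ ∏_{M/K ∈ ℳ(H/K)} (1 - M̂) ∈ ℚG`. -/
def IsEps {G : Type*} [Group G] [Fintype G] (H K : Subgroup G)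
    (e : MonoidAlgebra ℚ G) : Prop :=
  ∃ l : List (Subgroup G), l.Nodup ∧
    (∀ M : Subgroup G, M ∈ l ↔
      (K < M ∧ M ≤ H ∧ ∀ M' : Subgroup G, K < M' → M' ≤ H → M' ≤ M → M' = M)) ∧
    e = hatQ K * (l.map (fun M => 1 - hatQ M)).prod

/-- `(H,K)` is a strong Shoda pair of `G`. -/
def IsStrongShodaPair {G : Type*} [Group G] [Fintype G] (H K : Subgroup G) : Prop :=
  K ≤ H ∧ H ≤ Subgroup.normalizer (K : Set G) ∧
  (∀ n ∈ Subgroup.normalizer (K : Set G), ∀ h ∈ H, n * h * n⁻¹ ∈ H) ∧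
  (∃ c ∈ H, ∀ x ∈ H, ∃ i : ℕ, (c ^ i)⁻¹ * x ∈ K) ∧
  (∀ B : Subgroup G, H ≤ B → B ≤ Subgroup.normalizer (K : Set G) →
    (∀ x ∈ B, ∀ y ∈ B, x * y * x⁻¹ * y⁻¹ ∈ K) → B = H) ∧
  (∀ e : MonoidAlgebra ℚ G, IsEps H K e → ∀ g : G, g ∉ Subgroup.normalizer (K : Set G) →
    e * (MonoidAlgebra.single g (1 : ℚ) * e * MonoidAlgebra.single g⁻¹ (1 : ℚ)) = 0)

/-- `G` is strongly monomial: every irreducible complex character of `G` is induced from a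
linear character `ψ` of a subgroup `H` with kernel `K`, for a strong Shoda pair `(H,K)`. -/
def IsStronglyMonomial (G : Type) [Group G] [Fintype G] : Prop :=
  ∀ V : FDRep ℂ G, CategoryTheory.Simple V →
    ∃ (H K : Subgroup G) (_ : IsStrongShodaPair H K) (ψ : H →* ℂ),
      (∀ x : H, ψ x = 1 ↔ (x : G) ∈ K) ∧
      ∀ g : G, FDRep.character V g =
        (Nat.card H : ℂ)⁻¹ *
          ∑ x : G, if hx : x * g * x⁻¹ ∈ H then ψ ⟨x * g * x⁻¹, hx⟩ else 0

namespace Stmt13Aux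

variable {G : Type} [Group G] [Fintype G]

/-- coefficient-wise ring hom on monoid algebras -/
noncomputable def cmap {k R : Type*} [CommSemiring k] [CommSemiring R] (φ : k →+* R) :
    MonoidAlgebra k G →+* MonoidAlgebra R G :=
  MonoidAlgebra.liftNCRingHom (MonoidAlgebra.singleOneRingHom.comp φ)
    (MonoidAlgebra.of R G) (fun x y => by
      simp only [RingHom.coe_comp, Function.comp_apply, MonoidAlgebra.singleOneRingHom_apply,
        MonoidAlgebra.of_apply]
      unfold Commute SemiconjBy
      show MonoidAlgebra.single 1 (φ x) * MonoidAlgebra.single y 1 =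
        MonoidAlgebra.single y 1 * MonoidAlgebra.single 1 (φ x)
      rw [MonoidAlgebra.single_mul_single, MonoidAlgebra.single_mul_single]
      simp [mul_comm])

lemma cmap_single {k R : Type*} [CommSemiring k] [CommSemiring R] (φ : k →+* R)
    (a : G) (b : k) :
    cmap φ (MonoidAlgebra.single a b) = MonoidAlgebra.single a (φ b) := by
  unfold cmap MonoidAlgebra.liftNCRingHom
  simp only [RingHom.coe_mk, MonoidHom.coe_mk, OneHom.coe_mk]
  show MonoidAlgebra.liftNC _ _ (MonoidAlgebra.single a b) = _
  rw [MonoidAlgebra.liftNC_single]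
  show MonoidAlgebra.single 1 (φ b) * MonoidAlgebra.single a 1 = _
  rw [MonoidAlgebra.single_mul_single, one_mul, mul_one]

lemma cmap_apply {k R : Type*} [CommSemiring k] [CommSemiring R] (φ : k →+* R)
    (x : MonoidAlgebra k G) (g : G) :
    (cmap φ x).coeff g = φ (x.coeff g) := by
  induction x using MonoidAlgebra.induction_linear with
  | zero => simp
  | add f h hf hh => rw [map_add, MonoidAlgebra.coeff_add, Finsupp.add_apply, hf, hh, MonoidAlgebra.coeff_add, Finsupp.add_apply, map_add]
  | single a b =>
    rw [cmap_single, MonoidAlgebra.coeff_single, MonoidAlgebra.coeff_single]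
    rcases eq_or_ne a g with rfl | hne
    · rw [Finsupp.single_eq_same, Finsupp.single_eq_same]
    · rw [Finsupp.single_eq_of_ne hne.symm, Finsupp.single_eq_of_ne hne.symm, map_zero]

lemma cmap_injective {k R : Type*} [CommSemiring k] [CommSemiring R] (φ : k →+* R)
    (hφ : Function.Injective φ) : Function.Injective (cmap (G := G) φ) := by
  intro x y h
  ext g
  apply hφ
  rw [← cmap_apply, ← cmap_apply, h]



lemma single_one_comm {k : Type*} [CommRing k] (b : k) (x : MonoidAlgebra k G) :
    MonoidAlgebra.single (1 : G) b * x = x * MonoidAlgebra.single (1 : G) b := by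
  ext y
  rw [MonoidAlgebra.single_mul_apply, MonoidAlgebra.mul_single_apply]
  simp [mul_comm]

lemma mem_center_iff_coeff {k : Type*} [CommRing k] (x : MonoidAlgebra k G) :
    x ∈ Set.center (MonoidAlgebra k G) ↔ ∀ g h : G, x.coeff (g⁻¹ * h) = x.coeff (h * g⁻¹) := by
  constructor
  · intro hx g h
    have := (Semigroup.mem_center_iff.1 hx) (MonoidAlgebra.single g 1)
    have h2 := congrArg (fun z => z.coeff h) this
    simp only [MonoidAlgebra.single_mul_apply, MonoidAlgebra.mul_single_apply, one_mul,
      mul_one] at h2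
    exact h2
  · intro hx
    rw [Semigroup.mem_center_iff]
    intro y
    induction y using MonoidAlgebra.induction_linear with
    | zero => simp
    | add f h hf hh => rw [add_mul, mul_add, hf, hh]
    | single a b =>
      have hab : MonoidAlgebra.single a b =
          MonoidAlgebra.single a (1 : k) * MonoidAlgebra.single (1 : G) b := by
        rw [MonoidAlgebra.single_mul_single, mul_one, one_mul]
      have key : MonoidAlgebra.single a (1 : k) * x = x * MonoidAlgebra.single a (1 : k) := by
        ext h
        rw [MonoidAlgebra.single_mul_apply, MonoidAlgebra.mul_single_apply, one_mul, mul_one]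
        exact hx a h
      show MonoidAlgebra.single a b * x = x * MonoidAlgebra.single a b
      calc MonoidAlgebra.single a b * x
          = MonoidAlgebra.single a 1 * (MonoidAlgebra.single (1:G) b * x) := by
            rw [← mul_assoc, ← hab]
        _ = MonoidAlgebra.single a 1 * (x * MonoidAlgebra.single (1:G) b) := by
            rw [single_one_comm]
        _ = MonoidAlgebra.single a 1 * x * MonoidAlgebra.single (1:G) b := by
            rw [mul_assoc]
        _ = x * MonoidAlgebra.single a 1 * MonoidAlgebra.single (1:G) b := by rw [key]
        _ = x * MonoidAlgebra.single a b := by rw [mul_assoc, ← hab]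

lemma mem_center_cmap_iff {k R : Type*} [CommRing k] [CommRing R] (φ : k →+* R)
    (hφ : Function.Injective φ) (x : MonoidAlgebra k G) :
    cmap φ x ∈ Set.center (MonoidAlgebra R G) ↔ x ∈ Set.center (MonoidAlgebra k G) := by
  rw [mem_center_iff_coeff, mem_center_iff_coeff]
  constructor
  · intro hc g h
    apply hφ
    have := hc g h
    rwa [cmap_apply, cmap_apply] at this
  · intro hc g h
    rw [cmap_apply, cmap_apply, hc]

noncomputable def Amat (y : MonoidAlgebra ℂ G) : Matrix G G ℂ := fun i j => y.coeff (i * j⁻¹)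

lemma MA_mul_apply_fintype (y z : MonoidAlgebra ℂ G) (w : G) :
    (y * z).coeff w = ∑ k : G, y.coeff k * z.coeff (k⁻¹ * w) := by
  rw [MonoidAlgebra.coeff_mul_apply_left]
  exact Finsupp.sum_fintype _ _ (fun k => by simp)

lemma Amat_mul (y z : MonoidAlgebra ℂ G) : Amat (y * z) = Amat y * Amat z := by
  ext i j
  rw [Matrix.mul_apply]
  show (y * z).coeff (i * j⁻¹) = _
  rw [MA_mul_apply_fintype]
  apply Fintype.sum_equiv ((Equiv.inv G).trans (Equiv.mulRight i))
  intro k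
  show y.coeff k * z.coeff (k⁻¹ * (i * j⁻¹)) = y.coeff (i * (k⁻¹ * i)⁻¹) * z.coeff ((k⁻¹ * i) * j⁻¹)
  have h1 : i * (k⁻¹ * i)⁻¹ = k := by group
  rw [h1, mul_assoc]

lemma Amat_one : Amat (1 : MonoidAlgebra ℂ G) = 1 := by
  ext i j
  show (MonoidAlgebra.single (1:G) (1:ℂ)).coeff (i * j⁻¹) = (1 : Matrix G G ℂ) i j
  rw [Matrix.one_apply, MonoidAlgebra.coeff_single, Finsupp.single_apply]
  by_cases h : i = j
  · subst h; simp
  · rw [if_neg h, if_neg]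
    intro h1
    exact h (by rw [← mul_inv_eq_one]; exact h1.symm)

lemma Amat_pow (y : MonoidAlgebra ℂ G) (n : ℕ) : Amat (y ^ n) = (Amat y) ^ n := by
  induction n with
  | zero => simpa using Amat_one
  | succ n ih => rw [pow_succ, pow_succ, Amat_mul, ih]

lemma Amat_trace (y : MonoidAlgebra ℂ G) :
    (Amat y).trace = (Fintype.card G : ℂ) * y.coeff 1 := by
  rw [Matrix.trace]
  have : ∀ i : G, (Amat y).diag i = y.coeff 1 := fun i => by
    show y.coeff (i * i⁻¹) = y.coeff 1; rw [mul_inv_cancel]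
  rw [Finset.sum_congr rfl (fun i _ => this i)]
  simp [mul_comm]

lemma coeff_mem_adjoin {e : ℕ} (hepos : 0 < e) (hgpow : ∀ g : G, g ^ e = 1)
    {ζ : ℂ} (hζ : IsPrimitiveRoot ζ e) {x : MonoidAlgebra ℂ G}
    (hc : x ∈ Set.center (MonoidAlgebra ℂ G)) (hi : x * x = x) (g : G) :
    x.coeff g ∈ IntermediateField.adjoin ℚ {ζ} := by
  haveI : NeZero e := ⟨hepos.ne'⟩
  set E := IntermediateField.adjoin ℚ {ζ} with hE
  set s : MonoidAlgebra ℂ G := MonoidAlgebra.single g⁻¹ 1 with hs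
  set y : MonoidAlgebra ℂ G := x * s with hy
  have hxs : Commute x s := (Semigroup.mem_center_iff.1 hc s).symm
  have hse : s ^ e = 1 := by
    rw [hs, MonoidAlgebra.single_pow, hgpow, one_pow, MonoidAlgebra.one_def]
  have hxpow : ∀ n : ℕ, x ^ (n + 1) = x := by
    intro n
    induction n with
    | zero => rw [pow_one]
    | succ n ih => rw [pow_succ, ih, hi]
  have hye : y ^ (e + 1) = y := by
    rw [hy, hxs.mul_pow, hxpow, pow_succ, hse, one_mul]
  -- the matrix
  set A : Matrix G G ℂ := Amat y with hA
  have hApow : A ^ (e + 1) = A := by rw [hA, ← Amat_pow, hye]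
  -- every root of the charpoly lies in E
  have hroots : ∀ μ ∈ A.charpoly.roots, μ ∈ E := by
    intro μ hμ
    have hroot : A.charpoly.IsRoot μ := (Polynomial.mem_roots'.1 hμ).2
    have hdet : ((Matrix.charmatrix A).map (Polynomial.evalRingHom μ)).det = 0 := by
      have : (Polynomial.evalRingHom μ) (Matrix.charmatrix A).det = 0 := hroot
      rwa [RingHom.map_det] at this
    have hmat : (Matrix.charmatrix A).map (Polynomial.evalRingHom μ) = μ • (1 : Matrix G G ℂ) - A := by
      ext i j
      rw [Matrix.map_apply, Matrix.charmatrix_apply]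
      simp only [Polynomial.coe_evalRingHom, Polynomial.eval_sub, Polynomial.eval_C,
        Matrix.sub_apply, Matrix.smul_apply, Matrix.one_apply, smul_eq_mul]
      by_cases h : i = j
      · subst h; simp [Matrix.diagonal_apply_eq]
      · simp [Matrix.diagonal_apply_ne _ h, Matrix.one_apply_ne h, h]
    rw [hmat] at hdet
    obtain ⟨v, hv0, hv⟩ := (Matrix.exists_mulVec_eq_zero_iff).2 hdet
    have hAv : A.mulVec v = μ • v := by
      have := hv
      rw [Matrix.sub_mulVec, sub_eq_zero, Matrix.smul_mulVec, Matrix.one_mulVec] at this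
      exact this.symm
    have hpow : ∀ n : ℕ, (A ^ n).mulVec v = μ ^ n • v := by
      intro n
      induction n with
      | zero => simp [Matrix.one_mulVec]
      | succ n ih =>
        rw [pow_succ, ← Matrix.mulVec_mulVec, hAv, Matrix.mulVec_smul, ih, smul_smul, pow_succ]
        congr 1
        ring
    have heig : μ ^ (e + 1) = μ := by
      have h1 := hpow (e + 1)
      rw [hApow, hAv] at h1
      obtain ⟨i, hvi⟩ := Function.ne_iff.1 hv0
      have := congrFun h1 i
      simp only [Pi.smul_apply, smul_eq_mul] at this
      exact (mul_right_cancel₀ (by simpa using hvi) this).symm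
    have : μ * (μ ^ e - 1) = 0 := by
      have : μ ^ (e + 1) - μ = 0 := sub_eq_zero.2 heig
      calc μ * (μ ^ e - 1) = μ ^ (e + 1) - μ := by ring
        _ = 0 := this
    rcases mul_eq_zero.1 this with h0 | h1
    · rw [h0]; exact zero_mem E
    · have hμe : μ ^ e = 1 := by linear_combination h1
      obtain ⟨i, _, rfl⟩ := hζ.eq_pow_of_pow_eq_one hμe
      exact pow_mem (IntermediateField.mem_adjoin_simple_self ℚ ζ) i
  -- trace is in E
  have htr : A.trace ∈ E := by
    rw [Matrix.trace_eq_sum_roots_charpoly]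
    exact IntermediateField.multiset_sum_mem _ _ hroots
  have htr2 : A.trace = (Fintype.card G : ℂ) * x.coeff g := by
    rw [hA, Amat_trace]
    congr 1
    rw [hy, hs, MonoidAlgebra.mul_single_apply]
    simp
  have hcard : ((Fintype.card G : ℂ))⁻¹ * A.trace = x.coeff g := by
    rw [htr2, ← mul_assoc, inv_mul_cancel₀, one_mul]
    exact_mod_cast Fintype.card_ne_zero
  rw [← hcard]
  exact mul_mem (inv_mem (IntermediateField.natCast_mem E _)) htr

lemma rat_of_mem_inter (F : IntermediateField ℚ ℂ)
    {e : ℕ} (hepos : 0 < e) {ζ : ℂ} (hζ : IsPrimitiveRoot ζ e)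
    (hdeg : Module.finrank F (IntermediateField.adjoin F {ζ}) = Nat.totient e)
    {a : ℂ} (haF : a ∈ F) (haE : a ∈ IntermediateField.adjoin ℚ {ζ}) :
    ∃ q : ℚ, (algebraMap ℚ ℂ) q = a := by
  set E := IntermediateField.adjoin ℚ {ζ} with hEdef
  set K := IntermediateField.adjoin ℚ {a} with hKdef
  have hKF : K ≤ F := by
    rw [hKdef, IntermediateField.adjoin_le_iff]; simpa using haF
  have hKE : K ≤ E := by
    rw [hKdef, IntermediateField.adjoin_le_iff]; simpa using haE
  have hζint : IsIntegral ℚ ζ := by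
    refine ⟨Polynomial.X ^ e - Polynomial.C 1, Polynomial.monic_X_pow_sub_C 1 hepos.ne', ?_⟩
    simp [hζ.pow_eq_one]
  have hdegQ : (minpoly ℚ ζ).natDegree = Nat.totient e := by
    rw [← Polynomial.cyclotomic_eq_minpoly_rat hζ hepos, Polynomial.natDegree_cyclotomic]
  have hζintK : IsIntegral K ζ := hζint.tower_top
  have hζintF : IsIntegral F ζ := hζint.tower_top
  have hdegF : (minpoly F ζ).natDegree = Nat.totient e := by
    rw [← hdeg, IntermediateField.adjoin.finrank hζintF]
  have hKle : (minpoly K ζ).natDegree ≤ Nat.totient e := by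
    have hdvd := minpoly.dvd_map_of_isScalarTower ℚ K ζ
    have hne : (minpoly ℚ ζ).map (algebraMap ℚ K) ≠ 0 :=
      ((minpoly.monic hζint).map (algebraMap ℚ K)).ne_zero
    have := Polynomial.natDegree_le_of_dvd hdvd hne
    rwa [Polynomial.natDegree_map, hdegQ] at this
  have hFleK : (minpoly F ζ).natDegree ≤ (minpoly K ζ).natDegree := by
    set q : Polynomial F :=
      (minpoly K ζ).map (IntermediateField.inclusion hKF).toRingHom with hq
    have hq0 : Polynomial.aeval ζ q = 0 := by
      rw [hq, Polynomial.aeval_def, Polynomial.eval₂_map]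
      have hcomp : (algebraMap F ℂ).comp (IntermediateField.inclusion hKF).toRingHom
          = algebraMap K ℂ := by
        ext x; rfl
      rw [hcomp, ← Polynomial.aeval_def, minpoly.aeval]
    have hdvd2 : minpoly F ζ ∣ q := minpoly.dvd F ζ hq0
    have hqne : q ≠ 0 :=
      ((minpoly.monic hζintK).map (IntermediateField.inclusion hKF).toRingHom).ne_zero
    have := Polynomial.natDegree_le_of_dvd hdvd2 hqne
    rwa [hq, Polynomial.natDegree_map] at this
  have hKdeg : (minpoly K ζ).natDegree = Nat.totient e :=
    le_antisymm hKle (by rw [← hdegF]; exact hFleK)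
  have hfinE : Module.finrank ℚ E = Nat.totient e := by
    rw [hEdef, IntermediateField.adjoin.finrank hζint, hdegQ]
  have hEK : IntermediateField.extendScalars hKE = IntermediateField.adjoin K {ζ} :=
    IntermediateField.extendScalars_adjoin hKE
  have hrel : IntermediateField.relfinrank K E = Nat.totient e := by
    rw [IntermediateField.relfinrank_eq_finrank_of_le hKE, hEK,
      IntermediateField.adjoin.finrank hζintK, hKdeg]
  have hmul := IntermediateField.relfinrank_mul_relfinrank (bot_le : ⊥ ≤ K) hKE
  rw [IntermediateField.relfinrank_bot_left, IntermediateField.relfinrank_bot_left,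
    hrel, hfinE] at hmul
  have hpos : 0 < Nat.totient e := Nat.totient_pos.2 hepos
  have h1 : Module.finrank ℚ K = 1 := by
    have h2 : Module.finrank ℚ K * Nat.totient e = 1 * Nat.totient e := by
      rw [one_mul, hmul]
    exact Nat.eq_of_mul_eq_mul_right hpos h2
  have hKbot : K = ⊥ := IntermediateField.finrank_eq_one_iff.1 h1
  have haK : a ∈ K := IntermediateField.mem_adjoin_simple_self ℚ a
  rw [hKbot] at haK
  exact IntermediateField.mem_bot.1 haK

lemma exists_rat_preimage (F : IntermediateField ℚ ℂ)
    {e : ℕ} (hepos : 0 < e) (hgpow : ∀ g : G, g ^ e = 1)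
    {ζ : ℂ} (hζ : IsPrimitiveRoot ζ e)
    (hdeg : Module.finrank F (IntermediateField.adjoin F {ζ}) = Nat.totient e)
    (c : MonoidAlgebra F G) (hc : c ∈ Set.center (MonoidAlgebra F G)) (hci : c * c = c) :
    ∃ d : MonoidAlgebra ℚ G, cmap (algebraMap ℚ F) d = c := by
  set jc : MonoidAlgebra ℂ G := cmap (algebraMap F ℂ) c with hjc
  have hFinj : Function.Injective (algebraMap F ℂ) := (algebraMap F ℂ).injective
  have hjcc : jc ∈ Set.center (MonoidAlgebra ℂ G) :=
    (mem_center_cmap_iff (algebraMap F ℂ) hFinj c).2 hc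
  have hjci : jc * jc = jc := by rw [hjc, ← map_mul, hci]
  have hmem : ∀ g : G, ∃ q : ℚ, (algebraMap ℚ ℂ) q = jc.coeff g := by
    intro g
    have h1 : jc.coeff g ∈ F := by
      rw [hjc, cmap_apply]
      exact SetLike.coe_mem (c.coeff g)
    have h2 : jc.coeff g ∈ IntermediateField.adjoin ℚ {ζ} :=
      coeff_mem_adjoin hepos hgpow hζ hjcc hjci g
    exact rat_of_mem_inter F hepos hζ hdeg h1 h2
  choose q hq using hmem
  refine ⟨MonoidAlgebra.ofCoeff (Finsupp.equivFunOnFinite.symm q), MonoidAlgebra.ext (Finsupp.ext fun g => ?_)⟩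
  apply hFinj
  rw [cmap_apply]
  have h3 : (MonoidAlgebra.ofCoeff (Finsupp.equivFunOnFinite.symm q)).coeff g = q g := by
    simp [Finsupp.equivFunOnFinite, MonoidAlgebra.coeff_ofCoeff]
  rw [h3]
  have h4 : (algebraMap F ℂ) ((algebraMap ℚ F) (q g)) = algebraMap ℚ ℂ (q g) :=
    (IsScalarTower.algebraMap_apply ℚ F ℂ (q g)).symm
  rw [h4, hq g, hjc, cmap_apply]

end Stmt13Aux

theorem stmt13' (G : Type) [Group G] [Fintype G]
    (F : IntermediateField ℚ ℂ)
    (e : ℕ) (he : e = Monoid.exponent G) (ζ : ℂ) (hζ : IsPrimitiveRoot ζ e)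
    (hdeg : Module.finrank F (IntermediateField.adjoin F {ζ}) = Nat.totient e) :
    numSimple (MonoidAlgebra F G) = numSimple (MonoidAlgebra ℚ G) := by
  classical
  open Stmt13Aux in
  have hepos : 0 < e := by
    rw [he]; exact Nat.pos_of_ne_zero Monoid.exponent_ne_zero_of_finite
  have hgpow : ∀ g : G, g ^ e = 1 := fun g => by rw [he]; exact Monoid.pow_exponent_eq_one g
  set ι : MonoidAlgebra ℚ G →+* MonoidAlgebra F G := Stmt13Aux.cmap (algebraMap ℚ F) with hι
  have hQinj : Function.Injective (algebraMap ℚ F) := (algebraMap ℚ F).injective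
  have hinj : Function.Injective ι := Stmt13Aux.cmap_injective _ hQinj
  have hsur : ∀ c : MonoidAlgebra F G, c ∈ Set.center (MonoidAlgebra F G) → c * c = c →
      ∃ d, ι d = c := fun c hc hci =>
    Stmt13Aux.exists_rat_preimage F hepos hgpow hζ hdeg c hc hci
  have hfwd : ∀ x : MonoidAlgebra ℚ G, IsPrimitiveCentralIdempotent x →
      IsPrimitiveCentralIdempotent (ι x) := by
    rintro x ⟨hx0, hxi, hxc, hxp⟩
    refine ⟨fun h => hx0 (hinj (by rw [h, map_zero])), by rw [← map_mul, hxi], ?_, ?_⟩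
    · exact (Stmt13Aux.mem_center_cmap_iff (algebraMap ℚ F) hQinj x).2 hxc
    · intro f hfi hfc hef
      obtain ⟨d, rfl⟩ := hsur f hfc hfi
      have hd_i : d * d = d := hinj (by rw [map_mul, hfi])
      have hd_c : d ∈ Set.center (MonoidAlgebra ℚ G) :=
        (Stmt13Aux.mem_center_cmap_iff (algebraMap ℚ F) hQinj d).1 hfc
      have hd_e : x * d = d := hinj (by rw [map_mul, hef])
      rcases hxp d hd_i hd_c hd_e with h | h
      · left; rw [h, map_zero]
      · right; rw [h]
  have hbwd : ∀ x : MonoidAlgebra ℚ G, IsPrimitiveCentralIdempotent (ι x) →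
      IsPrimitiveCentralIdempotent x := by
    rintro x ⟨hx0, hxi, hxc, hxp⟩
    refine ⟨fun h => hx0 (by rw [h, map_zero]), hinj (by rw [map_mul, hxi]), ?_, ?_⟩
    · exact (Stmt13Aux.mem_center_cmap_iff (algebraMap ℚ F) hQinj x).1 hxc
    · intro f hfi hfc hef
      have h1 : ι f * ι f = ι f := by rw [← map_mul, hfi]
      have h2 : ι f ∈ Set.center (MonoidAlgebra F G) :=
        (Stmt13Aux.mem_center_cmap_iff (algebraMap ℚ F) hQinj f).2 hfc
      have h3 : ι x * ι f = ι f := by rw [← map_mul, hef]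
      rcases hxp (ι f) h1 h2 h3 with h | h
      · left; exact hinj (by rw [h, map_zero])
      · right; exact hinj h
  unfold numSimple
  refine Nat.card_congr (Equiv.ofBijective
    (fun x : {x : MonoidAlgebra ℚ G // IsPrimitiveCentralIdempotent x} =>
      (⟨ι x.1, hfwd x.1 x.2⟩ : {y : MonoidAlgebra F G // IsPrimitiveCentralIdempotent y}))
    ⟨?_, ?_⟩).symm
  · intro a b hab
    exact Subtype.ext (hinj (congrArg Subtype.val hab))
  · rintro ⟨y, hy⟩
    obtain ⟨d, rfl⟩ := hsur y hy.2.2.1 hy.2.1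
    exact ⟨⟨d, hbwd d hy⟩, rfl⟩


/-- let `G` be a finite strongly monomial group of exponent `e` and `F` a
number field.  If `[F(ζ_e) : F] = φ(e)`, then `FG` and `ℚG` have the same number of simple
components. -/
theorem stmt13 (G : Type) [Group G] [Fintype G] (hG : IsStronglyMonomial G)
    (F : IntermediateField ℚ ℂ) [FiniteDimensional ℚ F]
    (e : ℕ) (he : e = Monoid.exponent G) (ζ : ℂ) (hζ : IsPrimitiveRoot ζ e)
    (hdeg : Module.finrank F (IntermediateField.adjoin F {ζ}) = Nat.totient e) :
    numSimple (MonoidAlgebra F G) = numSimple (MonoidAlgebra ℚ G) :=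
  stmt13' G F e he ζ hζ hdeg
end

section
/- Let G = ⟨a,b | a^m = 1, b^n = a^t, b⁻¹ab = a^r⟩ be a finite metacyclic group with r^n ≡ 1 mod m and m | t(r−1). For each divisor d of o_m(r), let G_d = ⟨a, b^d⟩. If (G_d, K) is a pair with K ≤ G_d, G_d/K cyclic, and d = min{x dividing o_m(r) : a^{r^x − 1} ∈ K}, then K is normal in G_d and N_G(K) ⊇ G_d. -/
private lemma aux_conj_zpow {G : Type*} [Group G] (a b : G) (r : ℕ)
    (hconj : b⁻¹ * a * b = a ^ r) (j : ℤ) :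
    b⁻¹ * a ^ j * b = a ^ ((r : ℤ) * j) := by
  have h1 : (b⁻¹ * a * b⁻¹⁻¹) ^ j = b⁻¹ * a ^ j * b⁻¹⁻¹ := conj_zpow
  rw [inv_inv] at h1
  rw [← h1, hconj, ← zpow_natCast, ← zpow_mul]

private lemma aux_conj_pow {G : Type*} [Group G] (a b : G) (r : ℕ)
    (hconj : b⁻¹ * a * b = a ^ r) (d : ℕ) :
    (b ^ d)⁻¹ * a * b ^ d = a ^ ((r : ℤ) ^ d) := by
  induction d with
  | zero => simp
  | succ k ih =>
    have h2 : (b ^ (k+1))⁻¹ * a * b ^ (k+1) = b⁻¹ * ((b ^ k)⁻¹ * a * b ^ k) * b := by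
      rw [pow_succ]; group
    rw [h2, ih, aux_conj_zpow a b r hconj, pow_succ, mul_comm]

/-- let `G = ⟨a,b | a^m = 1, b^n = a^t, b⁻¹ab = a^r⟩` be a finite metacyclic
group with `r^n ≡ 1 mod m` and `m ∣ t(r−1)`.  For a divisor `d` of `o_m(r)`, set
`G_d = ⟨a, b^d⟩`.  If `(G_d, K)` is a pair with `K ≤ G_d`, `G_d/K` cyclic, and
`d = min{x ∣ o_m(r) : a^{r^x − 1} ∈ K}`, then `K` is normal in `G_d` and `N_G(K) ⊇ G_d`. -/
theorem stmt18 (G : Type*) [Group G] [Fintype G] (a b : G) (m n t r : ℕ)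
    (hm : 0 < m) (hn : 0 < n) (hr : 0 < r)
    (ham : a ^ m = 1) (hbn : b ^ n = a ^ t) (hconj : b⁻¹ * a * b = a ^ r)
    (hgen : Subgroup.closure {a, b} = ⊤)
    (hrn : (r : ZMod m) ^ n = 1) (hmt : m ∣ t * (r - 1))
    (d : ℕ) (hd : d ∣ orderOf ((r : ZMod m)))
    (K : Subgroup G) (hKGd : K ≤ Subgroup.closure {a, b ^ d})
    (hcyc : ∃ c ∈ Subgroup.closure {a, b ^ d},
      ∀ x ∈ Subgroup.closure {a, b ^ d}, ∃ i : ℤ, (c ^ i)⁻¹ * x ∈ K)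
    (hdK : a ^ (r ^ d) * a⁻¹ ∈ K)
    (hdmin : ∀ x : ℕ, x ∣ orderOf ((r : ZMod m)) → a ^ (r ^ x) * a⁻¹ ∈ K → d ≤ x) :
    (∀ g ∈ Subgroup.closure {a, b ^ d}, ∀ x ∈ K, g * x * g⁻¹ ∈ K) ∧
      Subgroup.closure {a, b ^ d} ≤ Subgroup.normalizer (K : Set G) := by

  set c : G := a ^ (r ^ d) * a⁻¹ with hc
  have hce : c = a ^ ((r : ℤ) ^ d - 1) := by
    rw [hc, zpow_sub, zpow_one]
    norm_cast
  set D := Subgroup.zpowers c with hD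
  have hDK : D ≤ K := Subgroup.zpowers_le.mpr hdK
  -- D is normal in G
  have hbinv : b⁻¹ ∈ Subgroup.normalizer (D : Set G) := by
    refine Subgroup.mem_normalizer_fintype ?_
    intro x hx
    obtain ⟨k, hk⟩ := hx
    refine ⟨(r : ℤ) * k, ?_⟩
    have hk' : c ^ k = x := hk
    have hx' : x = a ^ (((r:ℤ)^d - 1) * k) := by rw [← hk', hce, ← zpow_mul]
    show c ^ ((r:ℤ) * k) = b⁻¹ * x * b⁻¹⁻¹
    rw [hce, ← zpow_mul, inv_inv, hx', aux_conj_zpow a b r hconj]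
    congr 1
    ring
  have haN : a ∈ Subgroup.normalizer (D : Set G) := by
    refine Subgroup.mem_normalizer_fintype ?_
    intro x hx
    obtain ⟨k, hk⟩ := hx
    refine ⟨k, ?_⟩
    have hk' : c ^ k = x := hk
    have hx' : x = a ^ (((r:ℤ)^d - 1) * k) := by rw [← hk', hce, ← zpow_mul]
    show c ^ k = a * x * a⁻¹
    rw [hce, ← zpow_mul, hx']
    group
  have hnorm : D.Normal := by
    rw [← Subgroup.normalizer_eq_top_iff, eq_top_iff, ← hgen, Subgroup.closure_le]
    rintro x (rfl | rfl)
    · exact haN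
    · simpa using (Subgroup.inv_mem _ hbinv)
  -- quotient by D
  letI : D.Normal := hnorm
  set π : G →* G ⧸ D := QuotientGroup.mk' D with hπ
  have hcck : ∀ g h : G, Commute (π g) (π h) → g * h * g⁻¹ * h⁻¹ ∈ D := by
    intro g h hgh
    have h1 : π (g * h * g⁻¹ * h⁻¹) = 1 := by
      rw [← commutatorElement_def, map_commutatorElement, commutatorElement_eq_one_iff_commute]
      exact hgh
    rw [hπ] at h1
    have := (QuotientGroup.eq_one_iff _).mp h1
    simpa [commutatorElement_def] using this
  -- the generators commute mod D
  have hgencomm : Commute (π a) (π (b ^ d)) := by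
    have h0 : a ^ ((r:ℤ) ^ d) * a⁻¹ = c := by
      rw [hc]
      norm_cast
    have h1 : (b ^ d)⁻¹ * a * (b ^ d) * a⁻¹ ∈ D := by
      rw [aux_conj_pow a b r hconj d, h0]
      exact Subgroup.mem_zpowers c
    have h2 : π ((b ^ d)⁻¹) * π a * π (b ^ d) * (π a)⁻¹ = 1 := by
      have := (QuotientGroup.eq_one_iff _).mpr h1
      simpa [hπ, map_mul, map_inv] using this
    have h3 : Commute (π ((b ^ d)⁻¹)) (π a) := by
      rw [← commutatorElement_eq_one_iff_commute, commutatorElement_def]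
      simpa [mul_assoc] using h2
    have h4 : Commute (π (b ^ d)) (π a) := by
      simpa [map_inv] using h3.inv_left
    exact h4.symm
  -- all elements of Gd commute mod D
  set Gd := Subgroup.closure {a, b ^ d} with hGd
  set S : Set (G ⧸ D) := {π a, π (b ^ d)} with hS
  have himg : ∀ g ∈ Gd, π g ∈ Subgroup.closure S := by
    intro g hg
    have : π g ∈ Gd.map π := Subgroup.mem_map_of_mem π hg
    rwa [hGd, MonoidHom.map_closure, Set.image_insert_eq, Set.image_singleton] at this
  have step1 : Subgroup.closure S ≤ Subgroup.centralizer S := by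
    rw [Subgroup.closure_le]
    intro x hx
    rw [SetLike.mem_coe, Subgroup.mem_centralizer_iff]
    intro h hh
    rcases hx with rfl | hx
    · rcases hh with rfl | hh
      · rfl
      · rw [Set.mem_singleton_iff] at hh; subst hh
        exact hgencomm.symm.eq
    · rw [Set.mem_singleton_iff] at hx; subst hx
      rcases hh with rfl | hh
      · exact hgencomm.eq
      · rw [Set.mem_singleton_iff] at hh; subst hh
        rfl
  have key : ∀ x ∈ Subgroup.closure S, ∀ y ∈ Subgroup.closure S, Commute x y := by
    intro x hx y hy
    have hy' := Subgroup.mem_centralizer_iff.mp (step1 hy)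
    have hsub : S ⊆ (Subgroup.centralizer {y} : Set (G ⧸ D)) := by
      intro h hh
      rw [SetLike.mem_coe, Subgroup.mem_centralizer_iff]
      intro z hz
      rw [Set.mem_singleton_iff] at hz; subst hz
      exact (hy' h hh).symm
    have hx' := (Subgroup.closure_le _).mpr hsub hx
    have := Subgroup.mem_centralizer_iff.mp hx' y rfl
    exact this.symm
  -- commutators of Gd lie in K
  have hcomK : ∀ g ∈ Gd, ∀ x ∈ Gd, g * x * g⁻¹ * x⁻¹ ∈ K :=
    fun g hg x hx => hDK (hcck g x (key _ (himg g hg) _ (himg x hx)))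
  have main : ∀ g ∈ Gd, ∀ x ∈ K, g * x * g⁻¹ ∈ K := by
    intro g hg x hx
    have h1 : g * x * g⁻¹ * x⁻¹ ∈ K := hcomK g hg x (hKGd hx)
    have h2 : g * x * g⁻¹ = (g * x * g⁻¹ * x⁻¹) * x := by group
    rw [h2]
    exact K.mul_mem h1 hx
  refine ⟨main, ?_⟩
  intro g hg
  exact Subgroup.mem_normalizer_fintype (fun x hx => main g hg x hx)
end
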